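/- A continuous function f : U → R defined on an open subset U of a finite-dimensional normed space that is a continuous selection of finitely many continuously differentiable functions f_1,...,f_k (i.e., for every x ∈ U there is an index i with f(x) = f_i(x)) is locally Lipschitz continuous on U. Consequently, the generalized cap discrepancy Λ, being continuous and locally a selection of the C^1 functions φ̃_I^{(s)} around a generic point set X̄, is Lipschitz continuous on a neighborhood of X̄. -/

import Mathlib

open Real Set
open scoped RealInnerProductSpace

noncomputable section

/-- A point set is generic if every subfamily of at most `d` of its points is linearly
independent in `ℝ^d`. -/
def Generic {d N : ℕ} (X : Fin N → EuclideanSpace ℝ (Fin d)) : Prop :=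
  ∀ I : Finset (Fin N), I.card ≤ d → LinearIndependent ℝ (fun i : I => X i)

/-- The Gram matrix `X_I^T X_I` of the subfamily of points indexed by `I`. -/
def Gram {d N : ℕ} (X : Fin N → EuclideanSpace ℝ (Fin d)) (I : Finset (Fin N)) :
    Matrix I I ℝ :=
  fun i j => ⟪X i, X j⟫

/-- `t_I = (1^T (X_I^T X_I)^{-1} 1)^{-1/2}`. -/
def tI {d N : ℕ} (X : Fin N → EuclideanSpace ℝ (Fin d)) (I : Finset (Fin N)) : ℝ :=
  (Real.sqrt (∑ i : I, ∑ j : I, (Gram X I)⁻¹ i j))⁻¹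

/-- `w_I = t_I X_I (X_I^T X_I)^{-1} 1`. -/
def wI {d N : ℕ} (X : Fin N → EuclideanSpace ℝ (Fin d)) (I : Finset (Fin N)) :
    EuclideanSpace ℝ (Fin d) :=
  tI X I • ∑ i : I, (∑ j : I, (Gram X I)⁻¹ i j) • X i

/-- Normalizing constant `C_d`. -/
def Cd (d : ℕ) : ℝ := (∫ τ in (0:ℝ)..π, Real.sin τ ^ (d - 2))⁻¹

/-- The cap measure `μ^{cap}(t)` on `[-1,1]`. -/
def capM (d : ℕ) (t : ℝ) : ℝ :=
  if 0 ≤ t then Cd d * ∫ τ in (0:ℝ)..Real.arccos t, Real.sin τ ^ (d - 2)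
  else 1 - Cd d * ∫ τ in (0:ℝ)..Real.arccos (-t), Real.sin τ ^ (d - 2)

/-- The extended cap measure `μ^{Cap}` for `d ≥ 3`. -/
def capExtG (d : ℕ) (t : ℝ) : ℝ :=
  if |t| ≤ 1 then capM d t
  else if d = 3 then -t / 2 + 1 / 2
  else if t > 1 then 0 else 1

/-- The (extended) empirical measure `μ^{Emp}(X,w,t)` of the closed half space. -/
def empM {d N : ℕ} (X : Fin N → EuclideanSpace ℝ (Fin d)) (w : EuclideanSpace ℝ (Fin d))
    (t : ℝ) : ℝ :=
  (Nat.card {i : Fin N // t ≤ ⟪w, X i⟫} : ℝ) / N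

/-- The generalized cap discrepancy `Λ(X)` for generic `X ∈ (ℝ^d)^N`. -/
def Lam (d N : ℕ) (X : Fin N → EuclideanSpace ℝ (Fin d)) : ℝ :=
  sSup {r : ℝ | ∃ I : Finset (Fin N), I.Nonempty ∧ I.card ≤ d ∧
    (r = empM X (wI X I) (tI X I) - capExtG d (tI X I) ∨
     r = empM X (-(wI X I)) (-(tI X I)) - capExtG d (-(tI X I)))}


theorem part1 (F : Type) [NormedAddCommGroup F] [NormedSpace ℝ F] [FiniteDimensional ℝ F]
    (U : Set F) (hU : IsOpen U) (f : F → ℝ) (hf : ContinuousOn f U)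
    (k : ℕ) (g : Fin k → F → ℝ) (hg : ∀ i, ContDiff ℝ 1 (g i))
    (hsel : ∀ x ∈ U, ∃ i, f x = g i x) (x : F) (hx : x ∈ U) :
    ∃ K : NNReal, ∃ ε : ℝ, 0 < ε ∧ Metric.ball x ε ⊆ U ∧
      LipschitzOnWith K f (Metric.ball x ε) := by
  -- choose ε with closedBall x ε ⊆ U
  obtain ⟨ε, hε, hball⟩ : ∃ ε > 0, Metric.closedBall x ε ⊆ U := by
    rcases Metric.nhds_basis_closedBall.mem_iff.mp (hU.mem_nhds hx) with ⟨ε, hε, h⟩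
    exact ⟨ε, hε, h⟩
  have hcomp : IsCompact (Metric.closedBall x ε) := isCompact_closedBall x ε
  -- bound the derivatives
  have hCi : ∀ i : Fin k, ∃ C : ℝ, ∀ y ∈ Metric.closedBall x ε, ‖fderiv ℝ (g i) y‖ ≤ C := by
    intro i
    exact hcomp.exists_bound_of_continuousOn (((hg i).continuous_fderiv one_ne_zero).continuousOn)
  choose C0 hC0 using hCi
  set C : ℝ := ∑ i : Fin k, (|C0 i| + 1) with hCdef
  have hCnn : 0 ≤ C := Finset.sum_nonneg (fun i _ => by positivity)
  have hC : ∀ i : Fin k, ∀ y ∈ Metric.closedBall x ε, ‖fderiv ℝ (g i) y‖ ≤ C := by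
    intro i y hy
    calc ‖fderiv ℝ (g i) y‖ ≤ C0 i := hC0 i y hy
    _ ≤ |C0 i| + 1 := by cases abs_cases (C0 i) <;> linarith [abs_nonneg (C0 i)]
    _ ≤ C := Finset.single_le_sum (f := fun j => |C0 j| + 1) (fun j _ => by positivity) (Finset.mem_univ i)
  set K : NNReal := C.toNNReal with hKdef
  have hKC : (K : ℝ) = C := Real.coe_toNNReal C hCnn
  -- each g i is Lipschitz on the closed ball
  have hlip : ∀ i : Fin k, LipschitzOnWith K (g i) (Metric.closedBall x ε) := by
    intro i
    apply Convex.lipschitzOnWith_of_nnnorm_hasFDerivWithin_le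
      (f' := fun y => fderiv ℝ (g i) y) ?_ ?_ (convex_closedBall x ε)
    · intro y _
      exact (((hg i).differentiable one_ne_zero) y).hasFDerivAt.hasFDerivWithinAt
    · intro y hy
      have := hC i y hy
      rw [← NNReal.coe_le_coe, coe_nnnorm, hKC]
      exact this
  have hgd : ∀ i, ∀ p ∈ Metric.closedBall x ε, ∀ q ∈ Metric.closedBall x ε,
      dist (g i q) (g i p) ≤ C * dist q p := by
    intro i p hp q hq
    have := lipschitzOnWith_iff_dist_le_mul.mp (hlip i) q hq p hp
    rwa [hKC] at this
  -- centered local Lipschitz estimate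
  have hcen : ∀ p ∈ Metric.ball x ε, ∃ δ > 0, ∀ q ∈ Metric.ball x ε,
      dist q p < δ → dist (f q) (f p) ≤ C * dist q p := by
    intro p hp
    have hpU : p ∈ U := hball (Metric.ball_subset_closedBall hp)
    classical
    set S : Finset (Fin k) := Finset.univ.filter (fun i => g i p ≠ f p) with hS
    set η : ℝ := if h : S.Nonempty then S.inf' h (fun i => |g i p - f p|) else 1 with hη
    have hηpos : 0 < η := by
      rw [hη]
      split_ifs with h
      · rw [Finset.lt_inf'_iff]
        intro i hi
        have : g i p ≠ f p := (Finset.mem_filter.mp hi).2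
        have : g i p - f p ≠ 0 := sub_ne_zero.mpr this
        exact abs_pos.mpr this
      · norm_num
    have hηle : ∀ i ∈ S, η ≤ |g i p - f p| := by
      intro i hi
      rw [hη]
      rw [dif_pos ⟨i, hi⟩]
      exact Finset.inf'_le _ hi
    have hfc : ContinuousAt f p := hf.continuousAt (hU.mem_nhds hpU)
    have hev : ∀ᶠ q in nhds p, dist (f q) (f p) < η/3 ∧
        ∀ i : Fin k, dist (g i q) (g i p) < η/3 := by
      have h1 : ∀ᶠ q in nhds p, dist (f q) (f p) < η/3 :=
        Metric.tendsto_nhds.mp hfc (η/3) (by linarith)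
      have h2 : ∀ᶠ q in nhds p, ∀ i : Fin k, dist (g i q) (g i p) < η/3 := by
        rw [Filter.eventually_all]
        intro i
        exact Metric.tendsto_nhds.mp ((hg i).continuous.continuousAt) (η/3) (by linarith)
      exact h1.and h2
    rcases Metric.eventually_nhds_iff.mp hev with ⟨δ, hδ, hδprop⟩
    refine ⟨δ, hδ, ?_⟩
    intro q hq hqp
    have hqU : q ∈ U := hball (Metric.ball_subset_closedBall hq)
    obtain ⟨i, hi⟩ := hsel q hqU
    have hprop := hδprop hqp
    have hiS : i ∉ S := by
      intro hiS
      have h1 : |g i p - f p| ≤ |g i p - g i q| + |f q - f p| := by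
        have : g i p - f p = (g i p - g i q) + (f q - f p) := by rw [hi]; ring
        rw [this]; exact abs_add_le _ _
      have h2 : |g i p - g i q| < η/3 := by
        have := hprop.2 i
        rwa [Real.dist_eq, abs_sub_comm] at this
      have h3 : |f q - f p| < η/3 := by have := hprop.1; rwa [Real.dist_eq] at this
      have := hηle i hiS
      linarith
    have hgip : g i p = f p := by
      by_contra h
      exact hiS (Finset.mem_filter.mpr ⟨Finset.mem_univ i, h⟩)
    rw [hi, ← hgip]
    exact hgd i p (Metric.ball_subset_closedBall hp) q (Metric.ball_subset_closedBall hq)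
  -- globalize along segments
  refine ⟨K, ε, hε, fun y hy => hball (Metric.ball_subset_closedBall hy), ?_⟩
  rw [lipschitzOnWith_iff_dist_le_mul]
  intro z hz y hy
  rw [hKC, dist_comm z y]
  -- show dist (f z) (f y) ≤ C * dist y z  via path from y to z
  set γ : ℝ → F := fun t => y + t • (z - y) with hγ
  have hγ0 : γ 0 = y := by simp [hγ]
  have hγ1 : γ 1 = z := by simp [hγ]
  have hγmem : ∀ t ∈ Icc (0:ℝ) 1, γ t ∈ Metric.ball x ε := by
    intro t ht
    exact (convex_ball x ε).add_smul_sub_mem hy hz ht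
  have hγdist : ∀ s t : ℝ, dist (γ s) (γ t) = |s - t| * ‖z - y‖ := by
    intro s t
    rw [dist_eq_norm]
    have : γ s - γ t = (s - t) • (z - y) := by
      simp only [hγ]
      module
    rw [this, norm_smul, Real.norm_eq_abs]
  set L : ℝ := C * ‖z - y‖ with hL
  have hLnn : 0 ≤ L := mul_nonneg hCnn (norm_nonneg _)
  -- clamped composite
  set c : ℝ → ℝ := fun t => max 0 (min 1 t) with hc
  have hcmem : ∀ t, c t ∈ Icc (0:ℝ) 1 := by
    intro t
    constructor
    · exact le_max_left _ _
    · simp only [hc, max_le_iff]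
      constructor
      · norm_num
      · exact min_le_left _ _
  have hcid : ∀ t ∈ Icc (0:ℝ) 1, c t = t := by
    intro t ht
    simp only [hc]
    rw [min_eq_right ht.2, max_eq_right ht.1]
  have hccont : Continuous c := continuous_const.max (continuous_const.min continuous_id)
  have hφcont : Continuous (fun t => f (γ (c t))) := by
    have h1 : Continuous (fun t => γ (c t)) := by
      apply Continuous.add continuous_const
      exact (hccont).smul continuous_const
    exact hf.comp_continuous h1 (fun t => hball (Metric.ball_subset_closedBall (hγmem _ (hcmem t))))
  set S : Set ℝ := {t | t ∈ Icc (0:ℝ) 1 ∧ dist (f (γ (c t))) (f y) ≤ L * t} with hSdef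
  have hS0 : (0:ℝ) ∈ S := by
    constructor
    · exact ⟨le_refl 0, by norm_num⟩
    · have : c 0 = 0 := hcid 0 ⟨le_refl 0, by norm_num⟩
      rw [this, hγ0]
      simp
  have hSclosed : IsClosed S := by
    apply IsClosed.inter isClosed_Icc
    exact isClosed_le (Continuous.dist hφcont continuous_const) (continuous_const.mul continuous_id)
  have hSbdd : BddAbove S := ⟨1, fun t ht => ht.1.2⟩
  have hTS : sSup S ∈ S := hSclosed.csSup_mem ⟨0, hS0⟩ hSbdd
  set T : ℝ := sSup S with hT
  have hT1 : T ≤ 1 := hTS.1.2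
  have hT0 : 0 ≤ T := hTS.1.1
  have hTval : dist (f (γ T)) (f y) ≤ L * T := by
    have := hTS.2
    rwa [hcid T hTS.1] at this
  have hTeq : T = 1 := by
    by_contra hne
    have hTlt : T < 1 := lt_of_le_of_ne hT1 hne
    have hpball : γ T ∈ Metric.ball x ε := hγmem T hTS.1
    obtain ⟨δ, hδpos, hδ⟩ := hcen (γ T) hpball
    have hposq : 0 < δ / (‖z - y‖ + 1) := by positivity
    set t : ℝ := min 1 (T + δ / (‖z - y‖ + 1)) with ht
    have hTt : T < t := lt_min hTlt (by linarith)
    have htI : t ∈ Icc (0:ℝ) 1 := ⟨le_trans hT0 hTt.le, min_le_left _ _⟩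
    have hq : γ t ∈ Metric.ball x ε := hγmem t htI
    have htT : t - T ≤ δ / (‖z - y‖ + 1) := by
      have := min_le_right 1 (T + δ / (‖z - y‖ + 1))
      rw [ht]
      linarith
    have hdist : dist (γ t) (γ T) < δ := by
      rw [hγdist, abs_of_nonneg (by linarith : (0:ℝ) ≤ t - T)]
      calc (t - T) * ‖z - y‖ ≤ (δ / (‖z - y‖ + 1)) * ‖z - y‖ := by
            apply mul_le_mul_of_nonneg_right htT (norm_nonneg _)
        _ < δ := by
            rw [div_mul_eq_mul_div, div_lt_iff₀ (by positivity)]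
            nlinarith [norm_nonneg (z - y)]
    have hloc := hδ (γ t) hq hdist
    have hdd : dist (γ t) (γ T) = (t - T) * ‖z - y‖ := by
      rw [hγdist, abs_of_nonneg (by linarith : (0:ℝ) ≤ t - T)]
    have htS : t ∈ S := by
      refine ⟨htI, ?_⟩
      rw [hcid t htI]
      calc dist (f (γ t)) (f y) ≤ dist (f (γ t)) (f (γ T)) + dist (f (γ T)) (f y) :=
            dist_triangle _ _ _
        _ ≤ C * ((t - T) * ‖z - y‖) + L * T := by
            rw [← hdd]; exact add_le_add hloc hTval
        _ = L * t := by rw [hL]; ring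
    have : t ≤ T := le_csSup hSbdd htS
    linarith
  rw [hTeq] at hTval
  rw [hγ1] at hTval
  calc dist (f z) (f y) ≤ L * 1 := hTval
    _ = C * dist y z := by rw [hL, dist_eq_norm, norm_sub_rev]; ring

section Cap
open intervalIntegral

variable {d : ℕ}

/-- integrand for the cap measure in the `cos` substitution -/
def rho (d : ℕ) (s : ℝ) : ℝ := (max (1 - s^2) 0) ^ (((d:ℝ) - 3)/2)

lemma rho_nonneg (d : ℕ) (s : ℝ) : 0 ≤ rho d s :=
  Real.rpow_nonneg (le_max_right _ _) _

lemma rho_continuous (hd : 3 ≤ d) : Continuous (rho d) := by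
  rcases eq_or_lt_of_le hd with h3 | h4
  · have : rho d = fun _ => 1 := by
      funext s
      simp [rho, ← h3]
    rw [this]; exact continuous_const
  · have hp : (0:ℝ) < ((d:ℝ) - 3)/2 := by
      have : (4:ℝ) ≤ (d:ℝ) := by exact_mod_cast h4
      linarith
    have hbase : Continuous (fun s : ℝ => max (1 - s^2) 0) := by fun_prop
    apply Continuous.comp (g := fun x : ℝ => x ^ (((d:ℝ) - 3)/2)) ?_ hbase
    exact continuous_iff_continuousAt.mpr fun x =>
      Real.continuousAt_rpow_const x _ (Or.inr hp.le)

lemma rho_even (d : ℕ) (s : ℝ) : rho d (-s) = rho d s := by simp [rho]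

lemma rho_intInt (hd : 3 ≤ d) (a b : ℝ) :
    IntervalIntegrable (rho d) MeasureTheory.volume a b :=
  (rho_continuous hd).intervalIntegrable a b

lemma rho_eq_zero (hd : 4 ≤ d) {s : ℝ} (hs : 1 ≤ |s|) : rho d s = 0 := by
  have h1 : 1 - s^2 ≤ 0 := by nlinarith [sq_abs s, abs_nonneg s]
  have : max (1 - s^2) 0 = 0 := max_eq_right h1
  rw [rho, this]
  apply Real.zero_rpow
  have : (4:ℝ) ≤ (d:ℝ) := by exact_mod_cast hd
  intro h
  rw [div_eq_zero_iff] at h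
  rcases h with h | h <;> linarith

/-- the substitution identity -/
lemma integral_sin_pow_eq (hd : 3 ≤ d) {t : ℝ} (ht1 : -1 ≤ t) (ht2 : t ≤ 1) :
    (∫ τ in (0:ℝ)..Real.arccos t, Real.sin τ ^ (d - 2)) = ∫ s in t..1, rho d s := by
  have key := integral_comp_smul_deriv (a := 0) (b := Real.arccos t)
    (f := Real.cos) (f' := fun τ => -Real.sin τ) (g := rho d)
    (fun x _ => Real.hasDerivAt_cos x) (by fun_prop) (rho_continuous hd)
  rw [Real.cos_zero, Real.cos_arccos ht1 ht2] at key
  -- key : ∫ x in 0..arccos t, (-sin x) • rho d (cos x) = ∫ x in 1..t, rho d x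
  have lhs_eq : (∫ x in (0:ℝ)..Real.arccos t, (-Real.sin x) • (rho d ∘ Real.cos) x)
      = - ∫ x in (0:ℝ)..Real.arccos t, Real.sin x ^ (d - 2) := by
    rw [← intervalIntegral.integral_neg]
    apply intervalIntegral.integral_congr
    intro τ hτ
    have hτI : τ ∈ Set.Icc 0 (Real.arccos t) := by
      rwa [Set.uIcc_of_le (Real.arccos_nonneg t)] at hτ
    have hsin : 0 ≤ Real.sin τ :=
      Real.sin_nonneg_of_nonneg_of_le_pi hτI.1 (le_trans hτI.2 (Real.arccos_le_pi t))
    show (-Real.sin τ) • (rho d (Real.cos τ)) = -(Real.sin τ ^ (d-2))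
    have hrho : rho d (Real.cos τ) = (Real.sin τ ^ 2) ^ (((d:ℝ) - 3)/2) := by
      rw [rho]
      congr 1
      rw [max_eq_left (by nlinarith [Real.neg_one_le_cos τ, Real.cos_le_one τ] : (0:ℝ) ≤ 1 - (Real.cos τ)^2)]
      rw [← Real.sin_sq]
    rcases eq_or_lt_of_le hsin with h0 | hpos
    · rw [← h0]
      simp [zero_pow (by omega : d - 2 ≠ 0)]
    · rw [hrho, smul_eq_mul]
      have e1 : (Real.sin τ ^ 2) ^ (((d:ℝ) - 3)/2) = Real.sin τ ^ (((d:ℝ) - 3)) := by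
        rw [← Real.rpow_natCast (Real.sin τ) 2, ← Real.rpow_mul hsin]
        congr 1
        ring
      rw [e1]
      have e2 : Real.sin τ * Real.sin τ ^ ((d:ℝ) - 3) = Real.sin τ ^ ((d:ℝ) - 2) := by
        nth_rewrite 1 [← Real.rpow_one (Real.sin τ)]
        rw [← Real.rpow_add hpos]
        congr 1
        ring
      have e3 : Real.sin τ ^ ((d:ℝ) - 2) = Real.sin τ ^ (d - 2) := by
        rw [← Real.rpow_natCast (Real.sin τ) (d-2)]
        congr 1
        have : (2:ℝ) ≤ (d:ℝ) := by exact_mod_cast (by omega : 2 ≤ d)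
        push_cast [Nat.cast_sub (by omega : 2 ≤ d)]
        ring
      rw [neg_mul, e2, e3]
  rw [lhs_eq, intervalIntegral.integral_symm t 1] at key
  linarith

end Cap

section Cap2
open intervalIntegral
variable {d : ℕ}

lemma int_rho_zero (hd4 : 4 ≤ d) {a b : ℝ} (h : ∀ s ∈ Set.uIcc a b, 1 ≤ |s|) :
    (∫ s in a..b, rho d s) = 0 := by
  rw [intervalIntegral.integral_congr (g := fun _ => (0:ℝ))
    (fun s hs => rho_eq_zero hd4 (h s hs))]
  simp

lemma c0_pos (hd : 3 ≤ d) : 0 < ∫ τ in (0:ℝ)..π, Real.sin τ ^ (d - 2) := by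
  apply intervalIntegral.intervalIntegral_pos_of_pos_on
  · exact (by fun_prop : Continuous fun τ => Real.sin τ ^ (d-2)).intervalIntegrable 0 π
  · intro x hx
    exact pow_pos (Real.sin_pos_of_pos_of_lt_pi hx.1 hx.2) _
  · exact Real.pi_pos

lemma c0_eq (hd : 3 ≤ d) :
    (∫ τ in (0:ℝ)..π, Real.sin τ ^ (d - 2)) = ∫ s in (-1:ℝ)..1, rho d s := by
  rw [← Real.arccos_neg_one]
  exact integral_sin_pow_eq hd (by norm_num) (by norm_num)

lemma Cd_pos (hd : 3 ≤ d) : 0 < Cd d := inv_pos.mpr (c0_pos hd)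

lemma Cd_mul (hd : 3 ≤ d) : Cd d * ∫ s in (-1:ℝ)..1, rho d s = 1 := by
  rw [Cd, c0_eq hd]
  exact inv_mul_cancel₀ (by rw [← c0_eq hd]; exact (c0_pos hd).ne')

lemma int_rho_even {a b : ℝ} : (∫ s in a..b, rho d s) = ∫ s in (-b)..(-a), rho d s := by
  rw [← intervalIntegral.integral_comp_neg (fun s => rho d s)]
  apply intervalIntegral.integral_congr
  intro s _
  exact (rho_even d s).symm

lemma capExtG_eq (hd : 3 ≤ d) (t : ℝ) :
    capExtG d t = Cd d * ∫ s in t..1, rho d s := by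
  have hii : ∀ a b : ℝ, IntervalIntegrable (rho d) MeasureTheory.volume a b :=
    rho_intInt hd
  rw [capExtG]
  split_ifs with h1 h2 h3
  · rw [capM]
    rcases abs_le.mp h1 with ⟨hm, hp⟩
    split_ifs with h0
    · rw [integral_sin_pow_eq hd hm hp]
    · push_neg at h0
      rw [integral_sin_pow_eq hd (by linarith) (by linarith)]
      have he : (∫ s in (-t)..(1:ℝ), rho d s) = ∫ s in (-1:ℝ)..t, rho d s := by
        rw [int_rho_even]; norm_num
      have hadd : (∫ s in (-1:ℝ)..t, rho d s) + ∫ s in t..1, rho d s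
          = ∫ s in (-1:ℝ)..1, rho d s :=
        intervalIntegral.integral_add_adjacent_intervals (hii _ _) (hii _ _)
      have hmul : Cd d * (∫ s in (-1:ℝ)..t, rho d s) + Cd d * ∫ s in t..1, rho d s = 1 := by
        rw [← mul_add, hadd]; exact Cd_mul hd
      rw [he]
      linarith
  · subst h2
    have hrho1 : (∫ s in t..(1:ℝ), rho 3 s) = 1 - t := by
      have : ∀ s ∈ Set.uIcc t 1, rho 3 s = 1 := fun s _ => by simp [rho]
      rw [intervalIntegral.integral_congr this]
      simp
    have hC3 : Cd 3 = 2⁻¹ := by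
      rw [Cd]
      norm_num [integral_sin]
    rw [hrho1, hC3]
    ring
  · have hd4 : 4 ≤ d := by omega
    have h0 : (∫ s in t..(1:ℝ), rho d s) = 0 := by
      apply int_rho_zero hd4
      intro s hs
      rw [Set.uIcc_of_ge (by linarith : (1:ℝ) ≤ t)] at hs
      rw [abs_of_nonneg (by linarith [hs.1] : (0:ℝ) ≤ s)]
      exact hs.1
    rw [h0]
    ring
  · have hd4 : 4 ≤ d := by omega
    have htm : t < -1 := by
      push_neg at h1 h3
      rcases abs_cases t with ⟨he, _⟩ | ⟨he, _⟩ <;> [linarith; linarith]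
    have h0 : (∫ s in t..(-1:ℝ), rho d s) = 0 := by
      apply int_rho_zero hd4
      intro s hs
      rw [Set.uIcc_of_le (by linarith : t ≤ (-1:ℝ))] at hs
      rw [abs_of_nonpos (by linarith [hs.2] : s ≤ 0)]
      linarith [hs.2]
    have hadd : (∫ s in t..(-1:ℝ), rho d s) + ∫ s in (-1:ℝ)..1, rho d s
        = ∫ s in t..(1:ℝ), rho d s :=
      intervalIntegral.integral_add_adjacent_intervals (hii _ _) (hii _ _)
    rw [← hadd, h0, zero_add, Cd_mul hd]

lemma capExtG_anti (hd : 3 ≤ d) : Antitone (capExtG d) := by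
  intro s t hst
  rw [capExtG_eq hd, capExtG_eq hd]
  apply mul_le_mul_of_nonneg_left ?_ (Cd_pos hd).le
  have hadd : (∫ u in s..t, rho d u) + ∫ u in t..1, rho d u = ∫ u in s..(1:ℝ), rho d u :=
    intervalIntegral.integral_add_adjacent_intervals (rho_intInt hd _ _) (rho_intInt hd _ _)
  have hnn : 0 ≤ ∫ u in s..t, rho d u :=
    intervalIntegral.integral_nonneg hst (fun u _ => rho_nonneg d u)
  linarith

lemma capExtG_contDiff (hd : 3 ≤ d) : ContDiff ℝ 1 (capExtG d) := by
  have hder : ∀ t : ℝ, HasDerivAt (capExtG d) (-(Cd d * rho d t)) t := by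
    intro t
    have h1 : HasDerivAt (fun u => ∫ s in (1:ℝ)..u, rho d s) (rho d t) t :=
      intervalIntegral.integral_hasDerivAt_right (rho_intInt hd 1 t)
        ((rho_continuous hd).stronglyMeasurableAtFilter _ _)
        (rho_continuous hd).continuousAt
    have h3 := (h1.const_mul (Cd d)).neg
    have hfe : (fun u => Cd d * ∫ s in u..(1:ℝ), rho d s)
        = fun u => -(Cd d * ∫ s in (1:ℝ)..u, rho d s) := by
      funext u
      rw [intervalIntegral.integral_symm]
      ring
    have h2 : HasDerivAt (fun u => Cd d * ∫ s in u..(1:ℝ), rho d s) (-(Cd d * rho d t)) t := by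
      rw [hfe]
      exact h3
    apply h2.congr_of_eventuallyEq
    filter_upwards with u
    rw [capExtG_eq hd]
  rw [contDiff_one_iff_deriv]
  constructor
  · exact fun t => (hder t).differentiableAt
  · have : deriv (capExtG d) = fun t => -(Cd d * rho d t) := funext fun t => (hder t).deriv
    rw [this]
    exact (continuous_const.mul (rho_continuous hd)).neg

lemma capExtG_cont (hd : 3 ≤ d) : Continuous (capExtG d) :=
  (capExtG_contDiff hd).continuous

lemma capExtG_zero (hd : 3 ≤ d) : capExtG d 0 = 1/2 := by
  rw [capExtG_eq hd]
  have he : (∫ s in (-1:ℝ)..0, rho d s) = ∫ s in (0:ℝ)..1, rho d s := by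
    rw [int_rho_even]; norm_num
  have hadd : (∫ s in (-1:ℝ)..0, rho d s) + ∫ s in (0:ℝ)..1, rho d s
      = ∫ s in (-1:ℝ)..1, rho d s :=
    intervalIntegral.integral_add_adjacent_intervals (rho_intInt hd _ _) (rho_intInt hd _ _)
  have := Cd_mul hd
  have hCd := (Cd_pos hd).ne'
  rw [he] at hadd
  -- Cd * (2 * ∫0..1) = 1
  have : Cd d * ∫ s in (0:ℝ)..1, rho d s = 1/2 := by
    rw [← hadd] at this
    linarith [this]
  exact this

lemma capExtG_le_half (hd : 3 ≤ d) {t : ℝ} (ht : 0 ≤ t) : capExtG d t ≤ 1/2 := by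
  rw [← capExtG_zero hd]; exact capExtG_anti hd ht

lemma half_le_capExtG (hd : 3 ≤ d) {t : ℝ} (ht : t ≤ 0) : 1/2 ≤ capExtG d t := by
  rw [← capExtG_zero hd]; exact capExtG_anti hd ht

end Cap2


section GramSec
open Matrix
variable {d N : ℕ} (X : Fin N → EuclideanSpace ℝ (Fin d)) (I : Finset (Fin N))

def uvec : EuclideanSpace ℝ (Fin d) := ∑ i : I, (∑ j : I, (Gram X I)⁻¹ i j) • X i

def qval : ℝ := ∑ i : I, ∑ j : I, (Gram X I)⁻¹ i j

lemma wI_def : wI X I = tI X I • uvec X I := rfl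
lemma tI_def : tI X I = (Real.sqrt (qval X I))⁻¹ := rfl

lemma gram_symm : (Gram X I).transpose = Gram X I := by
  ext i j
  simp only [Matrix.transpose_apply]
  exact real_inner_comm (X (i:Fin N)) (X (j:Fin N))

lemma gram_mulVec (c : I → ℝ) (k : I) :
    (Gram X I).mulVec c k = ⟪X k, ∑ j : I, c j • X j⟫ := by
  rw [inner_sum]
  simp only [real_inner_smul_right]
  rw [Matrix.mulVec, dotProduct]
  exact Finset.sum_congr rfl (fun j _ => mul_comm _ _)

lemma gram_det_ne_of_li (h : LinearIndependent ℝ (fun i : I => X i)) :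
    (Gram X I).det ≠ 0 := by
  intro hdet
  obtain ⟨v, hv0, hv⟩ := Matrix.exists_mulVec_eq_zero_iff.mpr hdet
  have hinner : ∀ i : I, ⟪X i, ∑ j : I, v j • X j⟫ = (0:ℝ) := by
    intro i
    rw [← gram_mulVec, hv]
    rfl
  have hz : ∑ j : I, v j • X j = 0 := by
    have h2 : ⟪∑ j : I, v j • X j, ∑ j : I, v j • X j⟫ = (0:ℝ) := by
      rw [inner_sum]
      simp only [real_inner_smul_right]
      apply Finset.sum_eq_zero
      intro j _
      rw [real_inner_comm, hinner j, mul_zero]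
    exact inner_self_eq_zero.mp h2
  have := Fintype.linearIndependent_iff.mp h v hz
  exact hv0 (funext this)

lemma li_of_gram_det_ne (h : (Gram X I).det ≠ 0) :
    LinearIndependent ℝ (fun i : I => X i) := by
  rw [Fintype.linearIndependent_iff]
  intro g hg i
  by_contra hgi
  apply h
  apply Matrix.exists_mulVec_eq_zero_iff.mp
  refine ⟨g, fun hg0 => hgi (by rw [hg0]; rfl), ?_⟩
  funext k
  rw [gram_mulVec, hg, inner_zero_right]
  rfl

variable {X I}

lemma ginv_symm (hdet : (Gram X I).det ≠ 0) (i j : I) :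
    (Gram X I)⁻¹ i j = (Gram X I)⁻¹ j i := by
  have h1 : ((Gram X I)⁻¹).transpose = (Gram X I)⁻¹ := by
    rw [Matrix.transpose_nonsing_inv, gram_symm]
  conv_lhs => rw [← h1]
  rfl

lemma inner_uvec (hdet : (Gram X I).det ≠ 0) (k : I) : ⟪uvec X I, X k⟫ = 1 := by
  rw [uvec, sum_inner]
  simp only [real_inner_smul_left]
  have hGinvG : (Gram X I)⁻¹ * Gram X I = 1 :=
    Matrix.nonsing_inv_mul _ (isUnit_iff_ne_zero.mpr hdet)
  calc ∑ i : I, (∑ j : I, (Gram X I)⁻¹ i j) * ⟪X i, X k⟫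
      = ∑ i : I, ∑ j : I, (Gram X I)⁻¹ j i * Gram X I i k := by
        apply Finset.sum_congr rfl
        intro i _
        rw [Finset.sum_mul]
        exact Finset.sum_congr rfl (fun j _ => by rw [ginv_symm hdet i j]; rfl)
    _ = ∑ j : I, ∑ i : I, (Gram X I)⁻¹ j i * Gram X I i k := Finset.sum_comm
    _ = ∑ j : I, ((Gram X I)⁻¹ * Gram X I) j k := by
        apply Finset.sum_congr rfl
        intro j _
        rw [Matrix.mul_apply]
    _ = ∑ j : I, (1 : Matrix I I ℝ) j k := by rw [hGinvG]
    _ = 1 := by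
        rw [Finset.sum_congr rfl (fun j _ => Matrix.one_apply (i := j) (j := k))]
        simp

lemma qval_eq (hdet : (Gram X I).det ≠ 0) : qval X I = ⟪uvec X I, uvec X I⟫ := by
  nth_rewrite 2 [uvec]
  rw [inner_sum]
  simp only [real_inner_smul_right]
  rw [qval]
  apply Finset.sum_congr rfl
  intro i _
  rw [inner_uvec hdet i, mul_one]

lemma qval_pos (hdet : (Gram X I).det ≠ 0) (hne : I.Nonempty) : 0 < qval X I := by
  rcases hne with ⟨k, hk⟩
  have h0 : 0 ≤ qval X I := by rw [qval_eq hdet]; exact real_inner_self_nonneg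
  rcases eq_or_lt_of_le h0 with h | h
  · exfalso
    have hu : uvec X I = 0 := inner_self_eq_zero.mp (by rw [← qval_eq hdet, ← h])
    have := inner_uvec hdet ⟨k, hk⟩
    rw [hu, inner_zero_left] at this
    norm_num at this
  · exact h

lemma norm_uvec (hdet : (Gram X I).det ≠ 0) :
    ‖uvec X I‖ = Real.sqrt (qval X I) := by
  rw [qval_eq hdet, real_inner_self_eq_norm_sq, Real.sqrt_sq (norm_nonneg _)]

lemma tI_pos (hdet : (Gram X I).det ≠ 0) (hne : I.Nonempty) : 0 < tI X I := by
  rw [tI_def]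
  exact inv_pos.mpr (Real.sqrt_pos.mpr (qval_pos hdet hne))

lemma norm_wI (hdet : (Gram X I).det ≠ 0) (hne : I.Nonempty) : ‖wI X I‖ = 1 := by
  rw [wI_def, norm_smul, norm_uvec hdet, tI_def, Real.norm_eq_abs,
    abs_of_pos (by rw [← tI_def]; exact tI_pos hdet hne)]
  exact inv_mul_cancel₀ (Real.sqrt_pos.mpr (qval_pos hdet hne)).ne'

lemma inner_wI (hdet : (Gram X I).det ≠ 0) (k : I) :
    ⟪wI X I, X k⟫ = tI X I := by
  rw [wI_def, real_inner_smul_left, inner_uvec hdet, mul_one]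

lemma wI_mem_span :
    wI X I ∈ Submodule.span ℝ (Set.range fun i : I => X i) := by
  rw [wI_def, uvec]
  apply Submodule.smul_mem
  apply Submodule.sum_mem
  intro i _
  exact Submodule.smul_mem _ _ (Submodule.subset_span ⟨i, rfl⟩)

lemma wI_unique (hdet : (Gram X I).det ≠ 0) (hne : I.Nonempty)
    {v : EuclideanSpace ℝ (Fin d)} {c : ℝ}
    (hv : v ∈ Submodule.span ℝ (Set.range fun i : I => X i))
    (hvn : ‖v‖ = 1) (hc : 0 < c) (hvc : ∀ k : I, ⟪v, X k⟫ = c) :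
    v = wI X I ∧ c = tI X I := by
  obtain ⟨β, hβ⟩ := (Submodule.mem_span_range_iff_exists_fun ℝ).mp hv
  set α : I → ℝ := fun i => ∑ j : I, (Gram X I)⁻¹ i j with hα
  have huv : uvec X I = ∑ i : I, α i • X i := rfl
  -- the difference β - c • α is killed by the Gram matrix
  have hγ : (Gram X I).mulVec (β - c • α) = 0 := by
    funext k
    rw [gram_mulVec]
    have hsplit : ∑ j : I, (β - c • α) j • X j = (∑ j : I, β j • X j) - c • ∑ j : I, α j • X j := by
      rw [Finset.smul_sum, ← Finset.sum_sub_distrib]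
      apply Finset.sum_congr rfl
      intro j _
      simp [sub_smul, smul_smul]
    rw [hsplit, hβ, ← huv, inner_sub_right, real_inner_smul_right]
    have hvc2 : ⟪X (k:Fin N), v⟫ = c := by rw [real_inner_comm]; exact hvc k
    rw [hvc2, real_inner_comm (uvec X I) (X (k:Fin N)), inner_uvec hdet k]
    simp
  have hγ0 : β - c • α = 0 := by
    by_contra hne0
    exact hdet (Matrix.exists_mulVec_eq_zero_iff.mp ⟨_, hne0, hγ⟩)
  have hβα : β = c • α := by
    have := sub_eq_zero.mp hγ0
    exact this
  have hvcu : v = c • uvec X I := by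
    rw [← hβ, hβα, huv, Finset.smul_sum]
    apply Finset.sum_congr rfl
    intro j _
    simp [smul_smul]
  have hnu : ‖uvec X I‖ = Real.sqrt (qval X I) := norm_uvec hdet
  have hq : 0 < Real.sqrt (qval X I) := Real.sqrt_pos.mpr (qval_pos hdet hne)
  have hcval : c = tI X I := by
    have h1 : ‖v‖ = c * Real.sqrt (qval X I) := by
      rw [hvcu, norm_smul, hnu, Real.norm_eq_abs, abs_of_pos hc]
    rw [hvn] at h1
    rw [tI_def]
    field_simp
    linarith
  constructor
  · rw [hvcu, hcval, wI_def]
  · exact hcval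

end GramSec


section VarSec
variable {d N : ℕ}

/-- extraction of a linearly independent subfamily spanning and containing a given vector -/
lemma extract_linIndep (X : Fin N → EuclideanSpace ℝ (Fin d)) (A : Finset (Fin N))
    (hinj : Set.InjOn X ↑A) (y : EuclideanSpace ℝ (Fin d)) (hy0 : y ≠ 0)
    (hy : y ∈ Submodule.span ℝ (Set.range fun i : A => X i)) :
    ∃ I' : Finset (Fin N), I' ⊆ A ∧ I'.Nonempty ∧
      LinearIndependent ℝ (fun i : I' => X i) ∧
      y ∈ Submodule.span ℝ (Set.range fun i : I' => X i) := by
  classical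
  obtain ⟨bb, hbbsub, hbbspan, hbbli⟩ := exists_linearIndependent ℝ (Set.range fun i : A => X i)
  set I' : Finset (Fin N) := A.filter (fun m => X m ∈ bb) with hI'
  have hrange : (Set.range fun i : I' => X i) = bb := by
    apply Set.Subset.antisymm
    · rintro - ⟨i, rfl⟩
      exact (Finset.mem_filter.mp i.2).2
    · intro p hp
      obtain ⟨i, hip⟩ := hbbsub hp
      refine ⟨⟨i, Finset.mem_filter.mpr ⟨i.2, Set.mem_of_eq_of_mem hip hp⟩⟩, hip⟩
  have hyI : y ∈ Submodule.span ℝ (Set.range fun i : I' => X i) := by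
    rw [hrange, hbbspan]; exact hy
  refine ⟨I', Finset.filter_subset _ _, ?_, ?_, hyI⟩
  · rcases Finset.eq_empty_or_nonempty I' with h | h
    · exfalso
      apply hy0
      have : (Set.range fun i : I' => X i) = ∅ := by
        rw [Set.range_eq_empty_iff]
        constructor
        intro i
        rw [h] at i
        exact absurd i.2 (Finset.notMem_empty _)
      rw [this, Submodule.span_empty] at hyI
      simpa using hyI
    · exact h
  · -- linear independence via the injection into bb
    have hinj2 : Function.Injective (fun i : I' => (⟨X i, by rw [← hrange]; exact ⟨i, rfl⟩⟩ : bb)) := by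
      intro i j hij
      have : X (i:Fin N) = X (j:Fin N) := congrArg Subtype.val hij
      have := hinj (Finset.filter_subset _ _ i.2) (Finset.filter_subset _ _ j.2) this
      exact Subtype.ext this
    have := hbbli.comp _ hinj2
    exact this

/-- Minimum-norm point of `{y | ∀ m ∈ M, 1 ≤ ⟪X m, y⟫}` gives a "critical lower cap". -/
lemma var_min (X : Fin N → EuclideanSpace ℝ (Fin d)) (M : Finset (Fin N)) (hM : M.Nonempty)
    (hinj : Set.InjOn X (Set.univ))
    (y₀ : EuclideanSpace ℝ (Fin d)) (hy₀ : ∀ m ∈ M, 1 ≤ ⟪X m, y₀⟫) :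
    ∃ (I' : Finset (Fin N)) (y : EuclideanSpace ℝ (Fin d)),
      I' ⊆ M ∧ I'.Nonempty ∧ LinearIndependent ℝ (fun i : I' => X i) ∧
      (∀ m ∈ M, 1 ≤ ⟪X m, y⟫) ∧ (∀ i ∈ I', ⟪X i, y⟫ = 1) ∧
      y ∈ Submodule.span ℝ (Set.range fun i : I' => X i) ∧ ‖y‖ ≤ ‖y₀‖ ∧ y ≠ 0 := by
  classical
  set Q : Set (EuclideanSpace ℝ (Fin d)) := {y | ∀ m ∈ M, 1 ≤ ⟪X m, y⟫} with hQ
  have hQclosed : IsClosed Q := by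
    have : Q = ⋂ m ∈ M, {y | 1 ≤ ⟪X m, y⟫} := by
      ext y; simp [hQ]
    rw [this]
    apply isClosed_biInter
    intro m _
    exact isClosed_le continuous_const (Continuous.inner continuous_const continuous_id)
  set QB : Set (EuclideanSpace ℝ (Fin d)) := Q ∩ Metric.closedBall 0 ‖y₀‖ with hQB
  have hQBc : IsCompact QB := (isCompact_closedBall 0 ‖y₀‖).inter_left hQclosed
  have hy₀QB : y₀ ∈ QB := ⟨hy₀, by simp [Metric.mem_closedBall]⟩
  obtain ⟨y, hyQB, hymin⟩ := hQBc.exists_isMinOn ⟨y₀, hy₀QB⟩ continuous_norm.continuousOn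
  have hyQ : y ∈ Q := hyQB.1
  have hyn : ‖y‖ ≤ ‖y₀‖ := hymin hy₀QB
  have hmin : ∀ z ∈ Q, ‖z‖ < ‖y‖ → False := by
    intro z hz hlt
    have : z ∈ QB := ⟨hz, by simp [Metric.mem_closedBall]; linarith⟩
    exact absurd (hymin this) (not_le.mpr hlt)
  have hy0 : y ≠ 0 := by
    rcases hM with ⟨m, hm⟩
    intro h
    have := hyQ m hm
    rw [h, inner_zero_right] at this
    linarith
  set A : Finset (Fin N) := M.filter (fun m => ⟪X m, y⟫ = 1) with hA
  have hAne : A.Nonempty := by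
    by_contra hne
    rw [Finset.not_nonempty_iff_eq_empty] at hne
    have hstrict : ∀ m ∈ M, 1 < ⟪X m, y⟫ := by
      intro m hm
      rcases lt_or_eq_of_le (hyQ m hm) with h | h
      · exact h
      · exfalso
        have : m ∈ A := Finset.mem_filter.mpr ⟨hm, h.symm⟩
        rw [hne] at this
        exact Finset.notMem_empty _ this
    set c : ℝ := M.inf' hM (fun m => ⟪X m, y⟫) with hcdef
    have hc1 : 1 < c := by
      rw [hcdef, Finset.lt_inf'_iff]
      exact hstrict
    have hzQ : c⁻¹ • y ∈ Q := by
      intro m hm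
      rw [real_inner_smul_right]
      have h1 : c ≤ ⟪X m, y⟫ := Finset.inf'_le _ hm
      have h2 : (0:ℝ) < c⁻¹ := inv_pos.mpr (by linarith)
      calc (1:ℝ) = c⁻¹ * c := (inv_mul_cancel₀ (by linarith)).symm
        _ ≤ c⁻¹ * ⟪X m, y⟫ := by apply mul_le_mul_of_nonneg_left h1 h2.le
    apply hmin _ hzQ
    rw [norm_smul, Real.norm_eq_abs, abs_of_pos (inv_pos.mpr (by linarith : (0:ℝ) < c))]
    have : c⁻¹ < 1 := by
      rw [inv_lt_one_iff₀]
      right; exact hc1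
    have hpos : 0 < ‖y‖ := norm_pos_iff.mpr hy0
    nlinarith
  -- orthogonal projection argument: y lies in the span of the active constraints
  set K : Submodule ℝ (EuclideanSpace ℝ (Fin d)) :=
    Submodule.span ℝ (Set.range fun i : A => X i) with hK
  have hKfin : FiniteDimensional ℝ K := by infer_instance
  set b : EuclideanSpace ℝ (Fin d) := y - ((K.orthogonalProjectionOnto y : K) : EuclideanSpace ℝ (Fin d)) with hb
  have hbmem : b ∈ Kᗮ := K.sub_starProjection_mem_orthogonal y
  have hbinner : ∀ i ∈ A, ⟪X i, b⟫ = 0 := by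
    intro i hi
    have hXK : X i ∈ K := Submodule.subset_span ⟨⟨i, hi⟩, rfl⟩
    exact (Submodule.mem_orthogonal K b).mp hbmem (X i) hXK
  have hyb : ⟪y, b⟫ = ⟪b, b⟫ := by
    have hyp : y = ((K.orthogonalProjectionOnto y : K) : EuclideanSpace ℝ (Fin d)) + b := by rw [hb]; abel
    rw [hyp, inner_add_left]
    have h0 : ⟪((K.orthogonalProjectionOnto y : K) : EuclideanSpace ℝ (Fin d)), b⟫ = 0 :=
      (Submodule.mem_orthogonal K b).mp hbmem _ (K.orthogonalProjectionOnto y).2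
    rw [h0, zero_add]
  have hbzero : b = 0 := by
    by_contra hbne
    have hbpos : (0:ℝ) < ⟪b, b⟫ := by
      rcases lt_or_eq_of_le (real_inner_self_nonneg (x := b)) with h | h
      · exact h
      · exact absurd (inner_self_eq_zero.mp h.symm) hbne
    -- choose ε small so that y - ε • b stays feasible
    have hslack : ∀ m ∈ M, ∃ ε > 0, ∀ δ : ℝ, 0 < δ → δ ≤ ε → 1 ≤ ⟪X m, y - δ • b⟫ := by
      intro m hm
      by_cases hmA : m ∈ A
      · refine ⟨1, one_pos, fun δ _ _ => ?_⟩
        rw [inner_sub_right, real_inner_smul_right, hbinner m hmA, mul_zero, sub_zero]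
        exact hyQ m hm
      · have h1 : 1 < ⟪X m, y⟫ := by
          rcases lt_or_eq_of_le (hyQ m hm) with h | h
          · exact h
          · exact absurd (Finset.mem_filter.mpr ⟨hm, h.symm⟩) hmA
        set D : ℝ := |⟪X m, b⟫| + 1 with hD
        have hDpos : 0 < D := by positivity
        refine ⟨(⟪X m, y⟫ - 1) / D, div_pos (by linarith) hDpos, fun δ hδ0 hδε => ?_⟩
        rw [inner_sub_right, real_inner_smul_right]
        have h2 : δ * ⟪X m, b⟫ ≤ δ * D := by
          apply mul_le_mul_of_nonneg_left ?_ hδ0.le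
          rw [hD]
          cases abs_cases (⟪X m, b⟫ : ℝ) <;> linarith
        have h3 : δ * D ≤ ⟪X m, y⟫ - 1 := by
          rw [← div_mul_cancel₀ (⟪X m, y⟫ - 1) hDpos.ne']
          exact mul_le_mul_of_nonneg_right hδε hDpos.le
        linarith
    choose εf hεf hεprop using hslack
    have hMattach : (M.attach).Nonempty := Finset.attach_nonempty_iff.mpr hM
    set ε : ℝ := min 1 (M.attach.inf' hMattach (fun m => εf m.1 m.2)) with hε
    have hεpos : 0 < ε := by
      rw [hε]
      apply lt_min one_pos
      rw [Finset.lt_inf'_iff]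
      intro m _
      exact hεf m.1 m.2
    have hzQ : y - ε • b ∈ Q := by
      intro m hm
      apply hεprop m hm ε hεpos
      calc ε ≤ M.attach.inf' hMattach (fun m => εf m.1 m.2) := min_le_right _ _
        _ ≤ εf m hm := Finset.inf'_le _ (Finset.mem_attach M ⟨m, hm⟩)
    apply hmin _ hzQ
    have hε1 : ε ≤ 1 := min_le_left _ _
    have hexp : ‖y - ε • b‖^2 = ‖y‖^2 - ε * (2 - ε) * ⟪b, b⟫ := by
      rw [norm_sub_sq_real, real_inner_smul_right, hyb, norm_smul]
      rw [Real.norm_eq_abs, abs_of_pos hεpos, mul_pow]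
      rw [← real_inner_self_eq_norm_sq b]
      ring
    have h4 : ‖y - ε • b‖^2 < ‖y‖^2 := by
      rw [hexp]
      nlinarith [mul_pos hεpos hbpos, mul_pos (mul_pos hεpos (by linarith : (0:ℝ) < 2 - ε)) hbpos]
    exact lt_of_pow_lt_pow_left₀ 2 (norm_nonneg y) h4
  have hyK : y ∈ K := by
    have : y = ((K.orthogonalProjectionOnto y : K) : EuclideanSpace ℝ (Fin d)) := by
      have := sub_eq_zero.mp (hb ▸ hbzero)
      exact this
    rw [this]
    exact (K.orthogonalProjectionOnto y).2
  obtain ⟨I', hI'A, hI'ne, hI'li, hI'span⟩ :=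
    extract_linIndep X A (Set.InjOn.mono (Set.subset_univ _) hinj) y hy0 hyK
  refine ⟨I', y, hI'A.trans (Finset.filter_subset _ _), hI'ne, hI'li, hyQ, ?_, hI'span, hyn, hy0⟩
  intro i hi
  exact (Finset.mem_filter.mp (hI'A hi)).2

end VarSec


section VarSec2
variable {d N : ℕ}

lemma var_max (X : Fin N → EuclideanSpace ℝ (Fin d)) (M : Finset (Fin N)) (hM : M.Nonempty)
    (hinj : Set.InjOn X Set.univ)
    (hB : ∃ B : ℝ, ∀ z : EuclideanSpace ℝ (Fin d), (∀ m ∈ M, ⟪X m, z⟫ ≤ 1) → ‖z‖ ≤ B)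
    (y₀ : EuclideanSpace ℝ (Fin d)) (hy₀ : ∀ m ∈ M, ⟪X m, y₀⟫ ≤ 1) (hy₀0 : y₀ ≠ 0) :
    ∃ (I' : Finset (Fin N)) (y : EuclideanSpace ℝ (Fin d)),
      I' ⊆ M ∧ I'.Nonempty ∧ LinearIndependent ℝ (fun i : I' => X i) ∧
      (∀ m ∈ M, ⟪X m, y⟫ ≤ 1) ∧ (∀ i ∈ I', ⟪X i, y⟫ = 1) ∧
      y ∈ Submodule.span ℝ (Set.range fun i : I' => X i) ∧ ‖y₀‖ ≤ ‖y‖ ∧ y ≠ 0 := by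
  classical
  obtain ⟨B, hBprop⟩ := hB
  set P : Set (EuclideanSpace ℝ (Fin d)) := {z | ∀ m ∈ M, ⟪X m, z⟫ ≤ 1} with hP
  have hPclosed : IsClosed P := by
    have : P = ⋂ m ∈ M, {z | ⟪X m, z⟫ ≤ 1} := by ext z; simp [hP]
    rw [this]
    apply isClosed_biInter
    intro m _
    exact isClosed_le (Continuous.inner continuous_const continuous_id) continuous_const
  set PB : Set (EuclideanSpace ℝ (Fin d)) := P ∩ Metric.closedBall 0 B with hPB
  have hPBc : IsCompact PB := (isCompact_closedBall 0 B).inter_left hPclosed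
  have hy₀PB : y₀ ∈ PB := ⟨hy₀, by
    simp only [Metric.mem_closedBall, dist_zero_right]
    exact hBprop y₀ hy₀⟩
  obtain ⟨y, hyPB, hymax⟩ := hPBc.exists_isMaxOn ⟨y₀, hy₀PB⟩ continuous_norm.continuousOn
  have hyP : y ∈ P := hyPB.1
  have hyn : ‖y₀‖ ≤ ‖y‖ := hymax hy₀PB
  have hmax : ∀ z ∈ P, ‖y‖ < ‖z‖ → False := by
    intro z hz hlt
    have : z ∈ PB := ⟨hz, by
      simp only [Metric.mem_closedBall, dist_zero_right]
      exact hBprop z hz⟩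
    exact absurd (hymax this) (not_le.mpr hlt)
  have hy0 : y ≠ 0 := by
    intro h
    rw [h, norm_zero] at hyn
    exact hy₀0 (norm_le_zero_iff.mp hyn)
  set A : Finset (Fin N) := M.filter (fun m => ⟪X m, y⟫ = 1) with hA
  have hAne : A.Nonempty := by
    by_contra hne
    rw [Finset.not_nonempty_iff_eq_empty] at hne
    have hstrict : ∀ m ∈ M, ⟪X m, y⟫ < 1 := by
      intro m hm
      rcases lt_or_eq_of_le (hyP m hm) with h | h
      · exact h
      · exfalso
        have hmem : m ∈ A := Finset.mem_filter.mpr ⟨hm, h⟩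
        rw [hne] at hmem
        exact Finset.notMem_empty _ hmem
    set C1 : Finset (Fin N) := M.filter (fun m => 0 < ⟪X m, y⟫) with hC1
    set c : ℝ := if h : C1.Nonempty then min 2 (C1.inf' h (fun m => (⟪X m, y⟫)⁻¹)) else 2
      with hcdef
    have hc1 : 1 < c := by
      rw [hcdef]
      split_ifs with h
      · apply lt_min one_lt_two
        rw [Finset.lt_inf'_iff]
        intro m hm
        have h1 : 0 < ⟪X m, y⟫ := (Finset.mem_filter.mp hm).2
        have h2 : ⟪X m, y⟫ < 1 := hstrict m (Finset.mem_filter.mp hm).1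
        exact (one_lt_inv₀ h1).mpr h2
      · exact one_lt_two
    have hcle : ∀ m ∈ C1, c ≤ (⟪X m, y⟫)⁻¹ := by
      intro m hm
      have hCne : C1.Nonempty := ⟨m, hm⟩
      rw [hcdef, dif_pos hCne]
      exact le_trans (min_le_right _ _) (Finset.inf'_le _ hm)
    have hzP : c • y ∈ P := by
      intro m hm
      rw [real_inner_smul_right]
      by_cases h1 : 0 < ⟪X m, y⟫
      · have hm1 : m ∈ C1 := Finset.mem_filter.mpr ⟨hm, h1⟩
        calc c * ⟪X m, y⟫ ≤ (⟪X m, y⟫)⁻¹ * ⟪X m, y⟫ :=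
              mul_le_mul_of_nonneg_right (hcle m hm1) h1.le
          _ = 1 := inv_mul_cancel₀ h1.ne'
      · push_neg at h1
        have : c * ⟪X m, y⟫ ≤ 0 := mul_nonpos_of_nonneg_of_nonpos (by linarith) h1
        linarith
    apply hmax _ hzP
    rw [norm_smul, Real.norm_eq_abs, abs_of_pos (by linarith : (0:ℝ) < c)]
    have hpos : 0 < ‖y‖ := norm_pos_iff.mpr hy0
    nlinarith
  set K : Submodule ℝ (EuclideanSpace ℝ (Fin d)) :=
    Submodule.span ℝ (Set.range fun i : A => X i) with hK
  set b : EuclideanSpace ℝ (Fin d) :=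
    y - ((K.orthogonalProjectionOnto y : K) : EuclideanSpace ℝ (Fin d)) with hb
  have hbmem : b ∈ Kᗮ := K.sub_starProjection_mem_orthogonal y
  have hbinner : ∀ i ∈ A, ⟪X i, b⟫ = 0 := by
    intro i hi
    exact (Submodule.mem_orthogonal K b).mp hbmem (X i) (Submodule.subset_span ⟨⟨i, hi⟩, rfl⟩)
  have hyb : ⟪y, b⟫ = ⟪b, b⟫ := by
    have hyp : y = ((K.orthogonalProjectionOnto y : K) : EuclideanSpace ℝ (Fin d)) + b := by
      rw [hb]; abel
    rw [hyp, inner_add_left]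
    have h0 : ⟪((K.orthogonalProjectionOnto y : K) : EuclideanSpace ℝ (Fin d)), b⟫ = 0 :=
      (Submodule.mem_orthogonal K b).mp hbmem _ (K.orthogonalProjectionOnto y).2
    rw [h0, zero_add]
  have hbzero : b = 0 := by
    by_contra hbne
    have hbpos : (0:ℝ) < ⟪b, b⟫ := by
      rcases lt_or_eq_of_le (real_inner_self_nonneg (x := b)) with h | h
      · exact h
      · exact absurd (inner_self_eq_zero.mp h.symm) hbne
    have hslack : ∀ m ∈ M, ∃ ε > 0, ∀ δ : ℝ, 0 < δ → δ ≤ ε → ⟪X m, y + δ • b⟫ ≤ 1 := by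
      intro m hm
      by_cases hmA : m ∈ A
      · refine ⟨1, one_pos, fun δ _ _ => ?_⟩
        rw [inner_add_right, real_inner_smul_right, hbinner m hmA, mul_zero, add_zero]
        exact hyP m hm
      · have h1 : ⟪X m, y⟫ < 1 := by
          rcases lt_or_eq_of_le (hyP m hm) with h | h
          · exact h
          · exact absurd (Finset.mem_filter.mpr ⟨hm, h⟩) hmA
        set D : ℝ := |⟪X m, b⟫| + 1 with hD
        have hDpos : 0 < D := by positivity
        refine ⟨(1 - ⟪X m, y⟫) / D, div_pos (by linarith) hDpos, fun δ hδ0 hδε => ?_⟩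
        rw [inner_add_right, real_inner_smul_right]
        have h2 : δ * ⟪X m, b⟫ ≤ δ * D := by
          apply mul_le_mul_of_nonneg_left ?_ hδ0.le
          rw [hD]
          cases abs_cases (⟪X m, b⟫ : ℝ) <;> linarith
        have h3 : δ * D ≤ 1 - ⟪X m, y⟫ := by
          rw [← div_mul_cancel₀ (1 - ⟪X m, y⟫) hDpos.ne']
          exact mul_le_mul_of_nonneg_right hδε hDpos.le
        linarith
    choose εf hεf hεprop using hslack
    have hMattach : (M.attach).Nonempty := Finset.attach_nonempty_iff.mpr hM
    set ε : ℝ := min 1 (M.attach.inf' hMattach (fun m => εf m.1 m.2)) with hε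
    have hεpos : 0 < ε := by
      rw [hε]
      apply lt_min one_pos
      rw [Finset.lt_inf'_iff]
      intro m _
      exact hεf m.1 m.2
    have hzP : y + ε • b ∈ P := by
      intro m hm
      apply hεprop m hm ε hεpos
      calc ε ≤ M.attach.inf' hMattach (fun m => εf m.1 m.2) := min_le_right _ _
        _ ≤ εf m hm := Finset.inf'_le _ (Finset.mem_attach M ⟨m, hm⟩)
    apply hmax _ hzP
    have hexp : ‖y + ε • b‖^2 = ‖y‖^2 + (2*ε + ε^2) * ⟪b, b⟫ := by
      rw [norm_add_sq_real, real_inner_smul_right, hyb, norm_smul]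
      rw [Real.norm_eq_abs, abs_of_pos hεpos, mul_pow]
      rw [← real_inner_self_eq_norm_sq b]
      ring
    have h4 : ‖y‖^2 < ‖y + ε • b‖^2 := by
      rw [hexp]
      nlinarith [mul_pos hεpos hbpos]
    exact lt_of_pow_lt_pow_left₀ 2 (norm_nonneg _) h4
  have hyK : y ∈ K := by
    have : y = ((K.orthogonalProjectionOnto y : K) : EuclideanSpace ℝ (Fin d)) :=
      sub_eq_zero.mp (hb ▸ hbzero)
    rw [this]
    exact (K.orthogonalProjectionOnto y).2
  obtain ⟨I', hI'A, hI'ne, hI'li, hI'span⟩ :=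
    extract_linIndep X A (Set.InjOn.mono (Set.subset_univ _) hinj) y hy0 hyK
  refine ⟨I', y, hI'A.trans (Finset.filter_subset _ _), hI'ne, hI'li, hyP, ?_, hI'span, hyn, hy0⟩
  intro i hi
  exact (Finset.mem_filter.mp (hI'A hi)).2

end VarSec2


section DichSec
variable {d N : ℕ}

lemma generic_injOn {X : Fin N → EuclideanSpace ℝ (Fin d)} (hgen : Generic X) (hd2 : 2 ≤ d) :
    Set.InjOn X Set.univ := by
  intro i _ j _ hij
  by_contra hne
  classical
  have hli := hgen {i, j} (by rw [Finset.card_pair hne]; exact hd2)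
  have := hli.injective (a₁ := ⟨i, Finset.mem_insert_self _ _⟩)
    (a₂ := ⟨j, Finset.mem_insert_of_mem (Finset.mem_singleton_self _)⟩) hij
  exact hne (congrArg Subtype.val this)

lemma generic_ne_zero {X : Fin N → EuclideanSpace ℝ (Fin d)} (hgen : Generic X) (hd1 : 1 ≤ d)
    (i : Fin N) : X i ≠ 0 := by
  classical
  have hli := hgen {i} (by simp [hd1])
  exact hli.ne_zero ⟨i, Finset.mem_singleton_self _⟩

lemma bounded_or_separated (hd : 3 ≤ d) (X : Fin N → EuclideanSpace ℝ (Fin d))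
    (hgen : Generic X) (M : Finset (Fin N)) (hM : M.Nonempty) :
    (∃ y, ∀ m ∈ M, 1 ≤ ⟪X m, y⟫) ∨
    (∃ B : ℝ, ∀ z : EuclideanSpace ℝ (Fin d), (∀ m ∈ M, ⟪X m, z⟫ ≤ 1) → ‖z‖ ≤ B) := by
  classical
  set s : Finset (EuclideanSpace ℝ (Fin d)) := M.image X with hs
  by_cases h0 : (0 : EuclideanSpace ℝ (Fin d)) ∈ convexHull ℝ (↑s : Set (EuclideanSpace ℝ (Fin d)))
  · -- 0 in hull: feasible sets are bounded
    right
    by_contra hun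
    push_neg at hun
    have hseq : ∀ k : ℕ, ∃ z : EuclideanSpace ℝ (Fin d),
        (∀ m ∈ M, ⟪X m, z⟫ ≤ 1) ∧ (k + 1 : ℝ) ≤ ‖z‖ := by
      intro k
      obtain ⟨z, hz1, hz2⟩ := hun (k + 1)
      exact ⟨z, hz1, hz2.le⟩
    choose z hz1 hz2 using hseq
    have hzpos : ∀ k : ℕ, (0:ℝ) < ‖z k‖ := fun k => lt_of_lt_of_le (by positivity) (hz2 k)
    set u : ℕ → EuclideanSpace ℝ (Fin d) := fun k => ‖z k‖⁻¹ • z k with hu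
    have humem : ∀ k, u k ∈ Metric.sphere (0 : EuclideanSpace ℝ (Fin d)) 1 := by
      intro k
      simp only [Metric.mem_sphere, dist_zero_right, hu, norm_smul, Real.norm_eq_abs,
        abs_of_pos (inv_pos.mpr (hzpos k))]
      exact inv_mul_cancel₀ (hzpos k).ne'
    obtain ⟨b, hbs, φ, hφ, hbt⟩ := (isCompact_sphere (0 : EuclideanSpace ℝ (Fin d)) 1).tendsto_subseq humem
    have hb0 : b ≠ 0 := by
      intro h
      rw [h] at hbs
      simp at hbs
    have hbneg : ∀ m ∈ M, ⟪X m, b⟫ ≤ 0 := by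
      intro m hm
      have hcont : Filter.Tendsto (fun k => ⟪X m, u (φ k)⟫) Filter.atTop (nhds ⟪X m, b⟫) :=
        ((Continuous.inner continuous_const continuous_id).continuousAt.tendsto.comp hbt)
      have hzero : Filter.Tendsto (fun k : ℕ => ((k:ℝ) + 1)⁻¹) Filter.atTop (nhds 0) := by
        have := tendsto_one_div_add_atTop_nhds_zero_nat (𝕜 := ℝ)
        simpa [one_div] using this
      apply le_of_tendsto_of_tendsto' hcont hzero
      intro k
      have h1 : ⟪X m, u (φ k)⟫ = ‖z (φ k)‖⁻¹ * ⟪X m, z (φ k)⟫ := real_inner_smul_right _ _ _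
      have h2 : ‖z (φ k)‖⁻¹ * ⟪X m, z (φ k)⟫ ≤ ‖z (φ k)‖⁻¹ * 1 :=
        mul_le_mul_of_nonneg_left (hz1 (φ k) m hm) (inv_pos.mpr (hzpos (φ k))).le
      have h3 : ‖z (φ k)‖⁻¹ ≤ ((k:ℝ) + 1)⁻¹ := by
        apply inv_anti₀ (by positivity)
        calc ((k:ℝ)+1) ≤ ((φ k : ℕ):ℝ) + 1 := by
              have : (k:ℝ) ≤ ((φ k : ℕ):ℝ) := by exact_mod_cast hφ.le_apply
              linarith
          _ ≤ ‖z (φ k)‖ := hz2 (φ k)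
      rw [h1]
      linarith
    -- use the convex representation of 0 and genericity to reach a contradiction
    rw [Finset.convexHull_eq] at h0
    obtain ⟨w, hwnn, hwsum, hwcm⟩ := h0
    have hwzero : ∑ p ∈ s, w p • p = 0 := by
      rw [← Finset.centerMass_eq_of_sum_1 _ _ hwsum]
      exact hwcm
    have hinj : Set.InjOn X Set.univ := generic_injOn hgen (by omega)
    have hinj2 : ∀ x ∈ M, ∀ y ∈ M, X x = X y → x = y :=
      fun x _ y _ h => hinj (Set.mem_univ x) (Set.mem_univ y) h
    have hterm : ∀ p ∈ s, w p * ⟪p, b⟫ = 0 := by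
      rw [← Finset.sum_eq_zero_iff_of_nonpos]
      · have : ∑ p ∈ s, w p * ⟪p, b⟫ = ⟪∑ p ∈ s, w p • p, b⟫ := by
          rw [sum_inner]
          exact Finset.sum_congr rfl (fun p _ => (real_inner_smul_left _ _ _).symm)
        rw [this, hwzero, inner_zero_left]
      · intro p hp
        obtain ⟨m, hm, rfl⟩ := Finset.mem_image.mp hp
        exact mul_nonpos_of_nonneg_of_nonpos (hwnn _ hp) (hbneg m hm)
    set IM : Finset (Fin N) := M.filter (fun m => w (X m) ≠ 0) with hIM
    have hIMb : ∀ m ∈ IM, ⟪X m, b⟫ = 0 := by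
      intro m hm
      rcases Finset.mem_filter.mp hm with ⟨hmM, hw0⟩
      have := hterm (X m) (Finset.mem_image_of_mem X hmM)
      rcases mul_eq_zero.mp this with h | h
      · exact absurd h hw0
      · exact h
    have hIMzero : ∑ m ∈ IM, w (X m) • X m = 0 := by
      have h1 : ∑ p ∈ s, w p • p = ∑ m ∈ M, w (X m) • X m := Finset.sum_image hinj2
      have h2 : ∑ m ∈ M, w (X m) • X m = ∑ m ∈ IM, w (X m) • X m := by
        symm
        apply Finset.sum_subset (Finset.filter_subset _ _)
        intro m hmM hmn
        have : w (X m) = 0 := by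
          by_contra hc
          exact hmn (Finset.mem_filter.mpr ⟨hmM, hc⟩)
        rw [this, zero_smul]
      rw [← h2, ← h1, hwzero]
    have hIMne : IM.Nonempty := by
      by_contra hc
      rw [Finset.not_nonempty_iff_eq_empty] at hc
      have : ∑ p ∈ s, w p = 0 := by
        apply Finset.sum_eq_zero
        intro p hp
        obtain ⟨m, hm, rfl⟩ := Finset.mem_image.mp hp
        by_contra hw0
        have : m ∈ IM := Finset.mem_filter.mpr ⟨hm, hw0⟩
        rw [hc] at this
        exact Finset.notMem_empty _ this
      rw [hwsum] at this
      norm_num at this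
    by_cases hcard : IM.card ≤ d
    · -- small support: contradicts linear independence
      have hli := hgen IM hcard
      have := Fintype.linearIndependent_iff.mp hli (fun i => w (X i)) ?_
      · rcases hIMne with ⟨m, hm⟩
        have h0' := this ⟨m, hm⟩
        exact (Finset.mem_filter.mp hm).2 h0'
      · rw [← Finset.sum_attach IM (fun m => w (X m) • X m)] at hIMzero
        exact hIMzero
    · -- large support: d of the points lie in a hyperplane through the origin
      push_neg at hcard
      obtain ⟨I1, hI1sub, hI1card⟩ := Finset.exists_subset_card_eq hcard.le
      set W : Submodule ℝ (EuclideanSpace ℝ (Fin d)) := (Submodule.span ℝ {b})ᗮ with hW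
      have hmemW : ∀ i : I1, X i ∈ W := by
        intro i
        apply (Submodule.mem_orthogonal_singleton_iff_inner_right).mpr
        have := hIMb i (hI1sub i.2)
        rw [real_inner_comm]
        exact this
      have hliW : LinearIndependent ℝ (fun i : I1 => (⟨X i, hmemW i⟩ : W)) := by
        apply LinearIndependent.of_comp W.subtype
        exact hgen I1 hI1card.le
      have hfr : Module.finrank ℝ W = d - 1 := by
        have : Fact (Module.finrank ℝ (EuclideanSpace ℝ (Fin d)) = (d-1) + 1) := by
          constructor
          rw [finrank_euclideanSpace_fin]
          omega
        exact Submodule.finrank_orthogonal_span_singleton hb0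
      have hcardle := hliW.fintype_card_le_finrank
      rw [Fintype.card_coe, hI1card, hfr] at hcardle
      omega
  · -- 0 not in hull: strict separation via nearest point
    left
    have hsne : (↑s : Set (EuclideanSpace ℝ (Fin d))).Nonempty := by
      rcases hM with ⟨m, hm⟩
      exact ⟨X m, by simp [hs]; exact ⟨m, hm, rfl⟩⟩
    have hcomp : IsCompact (convexHull ℝ (↑s : Set (EuclideanSpace ℝ (Fin d)))) :=
      s.finite_toSet.isCompact_convexHull ℝ
    obtain ⟨c, hc, hcmin⟩ := hcomp.exists_isMinOn (hsne.mono (subset_convexHull ℝ _))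
      continuous_norm.continuousOn
    have hc0 : c ≠ 0 := fun h => h0 (h ▸ hc)
    have hcc : (0:ℝ) < ⟪c, c⟫ := by
      rcases lt_or_eq_of_le (real_inner_self_nonneg (x := c)) with h | h
      · exact h
      · exact absurd (inner_self_eq_zero.mp h.symm) hc0
    have hvar : ∀ x ∈ convexHull ℝ (↑s : Set (EuclideanSpace ℝ (Fin d))), ⟪c, c⟫ ≤ ⟪c, x⟫ := by
      intro x hx
      by_contra hlt
      push_neg at hlt
      have hd1 : (0:ℝ) < ⟪c, c - x⟫ := by
        rw [inner_sub_right]; linarith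
      set sδ : ℝ := min 1 (⟪c, c - x⟫ / (‖x - c‖^2 + 1)) with hsδ
      have hsδpos : 0 < sδ := lt_min one_pos (by positivity)
      have hsδ1 : sδ ≤ 1 := min_le_left _ _
      have hmem : c + sδ • (x - c) ∈ convexHull ℝ (↑s : Set (EuclideanSpace ℝ (Fin d))) :=
        (convex_convexHull ℝ _).add_smul_sub_mem hc hx ⟨hsδpos.le, hsδ1⟩
      have hge : ‖c‖^2 ≤ ‖c + sδ • (x - c)‖^2 := by
        have := hcmin hmem
        have h1 : ‖c‖ ≤ ‖c + sδ • (x - c)‖ := this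
        nlinarith [norm_nonneg c, norm_nonneg (c + sδ • (x - c))]
      have hexp : ‖c + sδ • (x - c)‖^2
          = ‖c‖^2 - 2 * sδ * ⟪c, c - x⟫ + sδ^2 * ‖x - c‖^2 := by
        rw [norm_add_sq_real, norm_smul, Real.norm_eq_abs, abs_of_pos hsδpos, mul_pow,
          real_inner_smul_right, inner_sub_right]
        rw [← real_inner_self_eq_norm_sq c, ← real_inner_self_eq_norm_sq (x - c)]
        simp only [inner_sub_right]
        ring
      have hkey : sδ * (‖x - c‖^2 + 1) ≤ ⟪c, c - x⟫ := by
        calc sδ * (‖x - c‖^2 + 1) ≤ (⟪c, c - x⟫ / (‖x - c‖^2 + 1)) * (‖x - c‖^2 + 1) := by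
              apply mul_le_mul_of_nonneg_right (min_le_right _ _) (by positivity)
          _ = ⟪c, c - x⟫ := div_mul_cancel₀ _ (by positivity)
      nlinarith [sq_nonneg sδ, mul_pos hsδpos hd1, sq_nonneg (‖x - c‖)]
    refine ⟨(⟪c, c⟫)⁻¹ • c, ?_⟩
    intro m hm
    have hxs : X m ∈ convexHull ℝ (↑s : Set (EuclideanSpace ℝ (Fin d))) :=
      subset_convexHull ℝ _ (by simp [hs]; exact ⟨m, hm, rfl⟩)
    rw [real_inner_smul_right]
    have h1 : ⟪c, c⟫ ≤ ⟪c, X m⟫ := hvar _ hxs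
    calc (1:ℝ) = (⟪c, c⟫)⁻¹ * ⟪c, c⟫ := (inv_mul_cancel₀ hcc.ne').symm
      _ ≤ (⟪c, c⟫)⁻¹ * ⟪X m, c⟫ := by
          apply mul_le_mul_of_nonneg_left ?_ (inv_pos.mpr hcc).le
          exact h1.trans (real_inner_comm (X m) c).le
      _ = _ := rfl

end DichSec


section SmoothSec
variable {d N : ℕ} {I : Finset (Fin N)}

lemma contDiff_finset_prod {ι : Type*} {F : Type*} [NormedAddCommGroup F] [NormedSpace ℝ F]
    (s : Finset ι) (f : ι → F → ℝ) (h : ∀ i ∈ s, ContDiff ℝ 1 (f i)) :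
    ContDiff ℝ 1 (fun x => ∏ i ∈ s, f i x) := by
  classical
  induction s using Finset.induction_on with
  | empty => simpa using contDiff_const
  | @insert a s ha ih =>
    have heq : (fun x => ∏ i ∈ insert a s, f i x) = fun x => f a x * ∏ i ∈ s, f i x := by
      funext x; rw [Finset.prod_insert ha]
    rw [heq]
    exact (h a (Finset.mem_insert_self a s)).mul
      (ih (fun i hi => h i (Finset.mem_insert_of_mem hi)))

lemma contDiff_det {n : Type*} [Fintype n] [DecidableEq n] {F : Type*} [NormedAddCommGroup F]
    [NormedSpace ℝ F] (f : n → n → F → ℝ) (h : ∀ i j, ContDiff ℝ 1 (f i j)) :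
    ContDiff ℝ 1 (fun x => Matrix.det (Matrix.of fun i j => f i j x)) := by
  have heq : (fun x => Matrix.det (Matrix.of fun i j => f i j x))
      = fun x => ∑ σ : Equiv.Perm n, ((Equiv.Perm.sign σ : ℤ) : ℝ) * ∏ i, f (σ i) i x := by
    funext x
    rw [Matrix.det_apply']
    rfl
  rw [heq]
  apply ContDiff.sum
  intro σ _
  exact contDiff_const.mul (contDiff_finset_prod _ _ (fun i _ => h _ _))

lemma gram_entry_contDiff (i j : I) :
    ContDiff ℝ 1 (fun X : Fin N → EuclideanSpace ℝ (Fin d) => Gram X I i j) := by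
  have h1 : ContDiff ℝ 1 (fun X : Fin N → EuclideanSpace ℝ (Fin d) => X (i:Fin N)) :=
    (ContinuousLinearMap.proj (R := ℝ) (φ := fun _ : Fin N => EuclideanSpace ℝ (Fin d))
      (i:Fin N)).contDiff
  have h2 : ContDiff ℝ 1 (fun X : Fin N → EuclideanSpace ℝ (Fin d) => X (j:Fin N)) :=
    (ContinuousLinearMap.proj (R := ℝ) (φ := fun _ : Fin N => EuclideanSpace ℝ (Fin d))
      (j:Fin N)).contDiff
  exact ContDiff.inner ℝ h1 h2

lemma gram_det_contDiff :
    ContDiff ℝ 1 (fun X : Fin N → EuclideanSpace ℝ (Fin d) => (Gram X I).det) :=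
  contDiff_det _ (fun i j => gram_entry_contDiff i j)

lemma gram_adj_contDiff (i j : I) :
    ContDiff ℝ 1 (fun X : Fin N → EuclideanSpace ℝ (Fin d) => (Gram X I).adjugate i j) := by
  classical
  have heq : (fun X : Fin N → EuclideanSpace ℝ (Fin d) => (Gram X I).adjugate i j)
      = fun X => Matrix.det (Matrix.of fun k l =>
          (fun (k l : I) (X : Fin N → EuclideanSpace ℝ (Fin d)) =>
            if k = j then (Pi.single i (1:ℝ) : I → ℝ) l else Gram X I k l) k l X) := by
    funext X
    rw [Matrix.adjugate_apply]
    congr 1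
    ext k l
    rw [Matrix.updateRow_apply]
    rfl
  rw [heq]
  apply contDiff_det
  intro k l
  by_cases hk : k = j
  · simp only [hk, if_pos rfl]
    exact contDiff_const
  · simp only [if_neg hk]
    exact gram_entry_contDiff k l

lemma ginv_entry (A : Matrix I I ℝ) (i j : I) :
    A⁻¹ i j = (A.det)⁻¹ * A.adjugate i j := by
  rw [Matrix.inv_def, Matrix.smul_apply, Ring.inverse_eq_inv']
  rfl

lemma qval_contDiffAt {X₀ : Fin N → EuclideanSpace ℝ (Fin d)} (hdet : (Gram X₀ I).det ≠ 0) :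
    ContDiffAt ℝ 1 (fun X => qval X I) X₀ := by
  have heq : (fun X : Fin N → EuclideanSpace ℝ (Fin d) => qval X I)
      = fun X => ((Gram X I).det)⁻¹ * ∑ i : I, ∑ j : I, (Gram X I).adjugate i j := by
    funext X
    rw [qval, Finset.mul_sum]
    apply Finset.sum_congr rfl
    intro i _
    rw [Finset.mul_sum]
    exact Finset.sum_congr rfl (fun j _ => ginv_entry _ i j)
  rw [heq]
  apply ContDiffAt.mul
  · exact (contDiffAt_inv ℝ hdet).comp X₀ gram_det_contDiff.contDiffAt
  · exact (ContDiff.sum (fun i _ => ContDiff.sum (fun j _ => gram_adj_contDiff i j))).contDiffAt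

lemma tI_contDiffAt {X₀ : Fin N → EuclideanSpace ℝ (Fin d)} (hdet : (Gram X₀ I).det ≠ 0)
    (hne : I.Nonempty) : ContDiffAt ℝ 1 (fun X => tI X I) X₀ := by
  have h1 : ContDiffAt ℝ 1 (fun X => Real.sqrt (qval X I)) X₀ :=
    (qval_contDiffAt hdet).sqrt (qval_pos hdet hne).ne'
  have h2 := h1.inv (Real.sqrt_pos.mpr (qval_pos hdet hne)).ne'
  exact h2

lemma tI_continuousAt {X₀ : Fin N → EuclideanSpace ℝ (Fin d)} (hdet : (Gram X₀ I).det ≠ 0)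
    (hne : I.Nonempty) : ContinuousAt (fun X => tI X I) X₀ :=
  (tI_contDiffAt hdet hne).continuousAt

lemma inner_wI_eq (j : Fin N) (X : Fin N → EuclideanSpace ℝ (Fin d)) :
    ⟪wI X I, X j⟫ = tI X I * ∑ i : I,
      (((Gram X I).det)⁻¹ * ∑ l : I, (Gram X I).adjugate i l) * ⟪X i, X j⟫ := by
  rw [wI_def, real_inner_smul_left, uvec, sum_inner]
  congr 1
  apply Finset.sum_congr rfl
  intro i _
  rw [real_inner_smul_left]
  congr 1
  rw [Finset.mul_sum]
  exact Finset.sum_congr rfl (fun l _ => ginv_entry _ i l)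

lemma inner_wI_continuousAt {X₀ : Fin N → EuclideanSpace ℝ (Fin d)}
    (hdet : (Gram X₀ I).det ≠ 0) (hne : I.Nonempty) (j : Fin N) :
    ContinuousAt (fun X => ⟪wI X I, X j⟫) X₀ := by
  have heq : (fun X : Fin N → EuclideanSpace ℝ (Fin d) => ⟪wI X I, X j⟫)
      = fun X => tI X I * ∑ i : I,
        (((Gram X I).det)⁻¹ * ∑ l : I, (Gram X I).adjugate i l) * ⟪X i, X j⟫ := by
    funext X
    exact inner_wI_eq j X
  rw [heq]
  apply ContinuousAt.mul (tI_continuousAt hdet hne)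
  have : ContDiffAt ℝ 1 (fun X : Fin N → EuclideanSpace ℝ (Fin d) => ∑ i : I,
      (((Gram X I).det)⁻¹ * ∑ l : I, (Gram X I).adjugate i l) * ⟪X i, X j⟫) X₀ := by
    apply ContDiffAt.sum
    intro i _
    apply ContDiffAt.mul
    · apply ContDiffAt.mul
      · exact (contDiffAt_inv ℝ hdet).comp X₀ gram_det_contDiff.contDiffAt
      · exact (ContDiff.sum (fun l _ => gram_adj_contDiff i l)).contDiffAt
    · have hXi : ContDiff ℝ 1 (fun X : Fin N → EuclideanSpace ℝ (Fin d) => X (i:Fin N)) :=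
        (ContinuousLinearMap.proj (R := ℝ) (φ := fun _ : Fin N => EuclideanSpace ℝ (Fin d))
          (i:Fin N)).contDiff
      have hXj : ContDiff ℝ 1 (fun X : Fin N → EuclideanSpace ℝ (Fin d) => X j) :=
        (ContinuousLinearMap.proj (R := ℝ) (φ := fun _ : Fin N => EuclideanSpace ℝ (Fin d))
          j).contDiff
      exact (ContDiff.inner ℝ hXi hXj).contDiffAt
  exact this.continuousAt

end SmoothSec


section LamSec
variable {d N : ℕ}

/-- candidate index -/
def CandIdx (d N : ℕ) : Type := {I : Finset (Fin N) // I.Nonempty ∧ I.card ≤ d} × Bool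

instance : Fintype (CandIdx d N) := by
  unfold CandIdx
  classical
  infer_instance

def candVal (d : ℕ) {N : ℕ} (X : Fin N → EuclideanSpace ℝ (Fin d)) (p : CandIdx d N) : ℝ :=
  if p.2 then empM X (wI X p.1.1) (tI X p.1.1) - capExtG d (tI X p.1.1)
  else empM X (-(wI X p.1.1)) (-(tI X p.1.1)) - capExtG d (-(tI X p.1.1))

lemma candSet_eq (X : Fin N → EuclideanSpace ℝ (Fin d)) :
    {r : ℝ | ∃ I : Finset (Fin N), I.Nonempty ∧ I.card ≤ d ∧
      (r = empM X (wI X I) (tI X I) - capExtG d (tI X I) ∨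
       r = empM X (-(wI X I)) (-(tI X I)) - capExtG d (-(tI X I)))}
    = Set.range (candVal d X) := by
  ext r
  constructor
  · rintro ⟨I, hne, hcard, h | h⟩
    · exact ⟨⟨⟨I, hne, hcard⟩, true⟩, h.symm⟩
    · exact ⟨⟨⟨I, hne, hcard⟩, false⟩, h.symm⟩
  · rintro ⟨⟨⟨I, hne, hcard⟩, s⟩, h⟩
    cases s
    · exact ⟨I, hne, hcard, Or.inr h.symm⟩
    · exact ⟨I, hne, hcard, Or.inl h.symm⟩

lemma lam_eq_sSup (X : Fin N → EuclideanSpace ℝ (Fin d)) :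
    Lam d N X = sSup (Set.range (candVal d X)) := by
  rw [Lam, candSet_eq]

lemma candIdx_nonempty (hd : 3 ≤ d) (hN : 0 < N) : Nonempty (CandIdx d N) := by
  refine ⟨⟨⟨{⟨0, hN⟩}, Finset.singleton_nonempty _, ?_⟩, true⟩⟩
  simp
  omega

lemma lam_ge (hd : 3 ≤ d) (hN : 0 < N) (X : Fin N → EuclideanSpace ℝ (Fin d)) (p : CandIdx d N) :
    candVal d X p ≤ Lam d N X := by
  rw [lam_eq_sSup]
  exact le_csSup (Set.finite_range _).bddAbove ⟨p, rfl⟩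

lemma lam_mem (hd : 3 ≤ d) (hN : 0 < N) (X : Fin N → EuclideanSpace ℝ (Fin d)) :
    ∃ p : CandIdx d N, Lam d N X = candVal d X p := by
  have hne := candIdx_nonempty hd hN
  rw [lam_eq_sSup]
  have h1 : (Set.range (candVal d X)).Nonempty := Set.range_nonempty _
  have h2 := h1.csSup_mem (Set.finite_range _)
  obtain ⟨p, hp⟩ := h2
  exact ⟨p, hp.symm⟩

open Classical in
lemma empM_eq (X : Fin N → EuclideanSpace ℝ (Fin d)) (w : EuclideanSpace ℝ (Fin d)) (t : ℝ) :
    empM X w t = ((Finset.univ.filter (fun i => t ≤ ⟪w, X i⟫)).card : ℝ) / N := by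
  rw [empM, Nat.card_eq_fintype_card, Fintype.card_subtype]

lemma neg_inner_cond (X : Fin N → EuclideanSpace ℝ (Fin d)) (w : EuclideanSpace ℝ (Fin d))
    (t : ℝ) (i : Fin N) : (-t ≤ ⟪-w, X i⟫) ↔ (⟪w, X i⟫ ≤ t) := by
  rw [inner_neg_left]
  constructor <;> intro h <;> linarith

open Classical in
lemma empM_ge (hN : 0 < N) (X : Fin N → EuclideanSpace ℝ (Fin d)) (w : EuclideanSpace ℝ (Fin d))
    (t : ℝ) (M : Finset (Fin N)) (h : ∀ m ∈ M, t ≤ ⟪w, X m⟫) :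
    (M.card : ℝ) / N ≤ empM X w t := by
  rw [empM_eq]
  have hNpos : (0:ℝ) < N := by exact_mod_cast hN
  have hcard : (M.card : ℝ) ≤ ((Finset.univ.filter (fun i => t ≤ ⟪w, X i⟫)).card : ℝ) := by
    exact_mod_cast Finset.card_le_card (fun m hm =>
      Finset.mem_filter.mpr ⟨Finset.mem_univ m, h m hm⟩)
  gcongr

/-- glue: a critical vector `y` realizes the cap `(wI X I', tI X I')`. -/
lemma glue (X : Fin N → EuclideanSpace ℝ (Fin d)) (I' : Finset (Fin N)) (hne : I'.Nonempty)
    (hli : LinearIndependent ℝ (fun i : I' => X i)) (y : EuclideanSpace ℝ (Fin d)) (hy0 : y ≠ 0)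
    (hinner : ∀ i ∈ I', ⟪X i, y⟫ = 1)
    (hspan : y ∈ Submodule.span ℝ (Set.range fun i : I' => X i)) :
    wI X I' = ‖y‖⁻¹ • y ∧ tI X I' = ‖y‖⁻¹ := by
  have hdet := gram_det_ne_of_li X I' hli
  have hnpos : 0 < ‖y‖ := norm_pos_iff.mpr hy0
  have h := wI_unique hdet hne (v := ‖y‖⁻¹ • y) (c := ‖y‖⁻¹)
    (Submodule.smul_mem _ _ hspan)
    (by rw [norm_smul, Real.norm_eq_abs, abs_of_pos (inv_pos.mpr hnpos)]
        exact inv_mul_cancel₀ hnpos.ne')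
    (inv_pos.mpr hnpos)
    (by intro k
        rw [real_inner_smul_left, real_inner_comm, hinner k k.2, mul_one])
  exact ⟨h.1.symm, h.2.symm⟩

end LamSec


section ContSec
variable {d N : ℕ}

open Classical in
lemma empM_neg_eq (X : Fin N → EuclideanSpace ℝ (Fin d)) (w : EuclideanSpace ℝ (Fin d)) (t : ℝ) :
    empM X (-w) (-t) = ((Finset.univ.filter (fun i => ⟪w, X i⟫ ≤ t)).card : ℝ) / N := by
  rw [empM_eq]
  have : Finset.filter (fun i => -t ≤ ⟪-w, X i⟫) Finset.univ
      = Finset.filter (fun i => ⟪w, X i⟫ ≤ t) Finset.univ :=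
    Finset.filter_congr (fun i _ => neg_inner_cond X w t i)
  rw [this]

open Classical in
lemma empM_ge_neg (hN : 0 < N) (X : Fin N → EuclideanSpace ℝ (Fin d))
    (w : EuclideanSpace ℝ (Fin d)) (t : ℝ) (M : Finset (Fin N))
    (h : ∀ m ∈ M, ⟪w, X m⟫ ≤ t) : (M.card : ℝ) / N ≤ empM X (-w) (-t) := by
  apply empM_ge hN
  intro m hm
  rw [neg_inner_cond]
  exact h m hm

lemma card_le_dim {X : Fin N → EuclideanSpace ℝ (Fin d)} {I : Finset (Fin N)}
    (hli : LinearIndependent ℝ (fun i : I => X i)) : I.card ≤ d := by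
  have := hli.fintype_card_le_finrank
  rwa [Fintype.card_coe, finrank_euclideanSpace_fin] at this

theorem lam_continuousAt (hd : 3 ≤ d) (hN : 0 < N) {Y : Fin N → EuclideanSpace ℝ (Fin d)}
    (hgenEv : ∀ᶠ X in nhds Y, Generic X)
    (hdets : ∀ I : Finset (Fin N), I.Nonempty → I.card ≤ d → (Gram Y I).det ≠ 0) :
    ContinuousAt (Lam d N) Y := by
  classical
  rw [ContinuousAt, Metric.tendsto_nhds]
  intro ε hε
  -- UPPER bound (upper semicontinuity of each candidate)
  have hupper : ∀ᶠ X in nhds Y, Lam d N X ≤ Lam d N Y + ε/2 := by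
    have hkey : ∀ p : CandIdx d N, ∀ᶠ X in nhds Y, candVal d X p ≤ candVal d Y p + ε/2 := by
      rintro ⟨⟨I, hIne, hIcard⟩, s⟩
      have hdet := hdets I hIne hIcard
      have htc : ContinuousAt (fun X => tI X I) Y := tI_continuousAt hdet hIne
      cases s with
      | true =>
        have hcount : ∀ᶠ X in nhds Y, empM X (wI X I) (tI X I) ≤ empM Y (wI Y I) (tI Y I) := by
          have hjcond : ∀ j : Fin N, ∀ᶠ X in nhds Y,
              (tI X I ≤ ⟪wI X I, X j⟫ → tI Y I ≤ ⟪wI Y I, Y j⟫) := by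
            intro j
            by_cases hj : tI Y I ≤ ⟪wI Y I, Y j⟫
            · filter_upwards with X _; exact hj
            · push_neg at hj
              have hev := ContinuousAt.eventually_lt (inner_wI_continuousAt hdet hIne j) htc hj
              filter_upwards [hev] with X hX hle
              exfalso; exact absurd hle (not_le.mpr hX)
          filter_upwards [Filter.eventually_all.mpr hjcond] with X hX
          rw [empM_eq, empM_eq]
          have hcard := Finset.card_le_card (s := Finset.univ.filter (fun j => tI X I ≤ ⟪wI X I, X j⟫))
            (t := Finset.univ.filter (fun j => tI Y I ≤ ⟪wI Y I, Y j⟫))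
            (fun j hj => Finset.mem_filter.mpr ⟨Finset.mem_univ j, hX j (Finset.mem_filter.mp hj).2⟩)
          have hcard2 : ((Finset.univ.filter (fun j => tI X I ≤ ⟪wI X I, X j⟫)).card : ℝ)
              ≤ ((Finset.univ.filter (fun j => tI Y I ≤ ⟪wI Y I, Y j⟫)).card : ℝ) := by
            exact_mod_cast hcard
          gcongr
        have hcap : ∀ᶠ X in nhds Y,
            capExtG d (tI Y I) - ε/2 ≤ capExtG d (tI X I) := by
          have hc : ContinuousAt (fun X => capExtG d (tI X I)) Y :=
            ((capExtG_cont hd).continuousAt).comp htc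
          have := Metric.tendsto_nhds.mp hc.tendsto (ε/2) (by linarith)
          filter_upwards [this] with X hX
          rw [Real.dist_eq, abs_sub_lt_iff] at hX
          linarith [hX.2]
        filter_upwards [hcount, hcap] with X h1 h2
        simp only [candVal, if_true]
        linarith
      | false =>
        have hcount : ∀ᶠ X in nhds Y,
            empM X (-(wI X I)) (-(tI X I)) ≤ empM Y (-(wI Y I)) (-(tI Y I)) := by
          have hjcond : ∀ j : Fin N, ∀ᶠ X in nhds Y,
              (⟪wI X I, X j⟫ ≤ tI X I → ⟪wI Y I, Y j⟫ ≤ tI Y I) := by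
            intro j
            by_cases hj : ⟪wI Y I, Y j⟫ ≤ tI Y I
            · filter_upwards with X _; exact hj
            · push_neg at hj
              have hev := ContinuousAt.eventually_lt htc (inner_wI_continuousAt hdet hIne j) hj
              filter_upwards [hev] with X hX hle
              exfalso; exact absurd hle (not_le.mpr hX)
          filter_upwards [Filter.eventually_all.mpr hjcond] with X hX
          rw [empM_neg_eq, empM_neg_eq]
          have hcard := Finset.card_le_card (s := Finset.univ.filter (fun j => ⟪wI X I, X j⟫ ≤ tI X I))
            (t := Finset.univ.filter (fun j => ⟪wI Y I, Y j⟫ ≤ tI Y I))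
            (fun j hj => Finset.mem_filter.mpr ⟨Finset.mem_univ j, hX j (Finset.mem_filter.mp hj).2⟩)
          have hcard2 : ((Finset.univ.filter (fun j => ⟪wI X I, X j⟫ ≤ tI X I)).card : ℝ)
              ≤ ((Finset.univ.filter (fun j => ⟪wI Y I, Y j⟫ ≤ tI Y I)).card : ℝ) := by
            exact_mod_cast hcard
          gcongr
        have hcap : ∀ᶠ X in nhds Y,
            capExtG d (-(tI Y I)) - ε/2 ≤ capExtG d (-(tI X I)) := by
          have hc : ContinuousAt (fun X => capExtG d (-(tI X I))) Y :=
            ((capExtG_cont hd).continuousAt).comp htc.neg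
          have := Metric.tendsto_nhds.mp hc.tendsto (ε/2) (by linarith)
          filter_upwards [this] with X hX
          rw [Real.dist_eq, abs_sub_lt_iff] at hX
          linarith [hX.2]
        filter_upwards [hcount, hcap] with X h1 h2
        simp only [candVal, Bool.false_eq_true, if_false]
        linarith
    filter_upwards [Filter.eventually_all.mpr hkey] with X hX
    obtain ⟨p, hp⟩ := lam_mem hd hN X
    rw [hp]
    exact le_trans (hX p) (by linarith [lam_ge hd hN Y p])
  -- LOWER bound (competitor construction)
  have hlower : ∀ᶠ X in nhds Y, Lam d N Y - ε/2 ≤ Lam d N X := by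
    obtain ⟨p, hp⟩ := lam_mem hd hN Y
    obtain ⟨⟨I, hIne, hIcard⟩, s⟩ := p
    have hdet := hdets I hIne hIcard
    have htpos : 0 < tI Y I := tI_pos hdet hIne
    have hdetEv : ∀ᶠ X in nhds Y, (Gram X I).det ≠ 0 :=
      (gram_det_contDiff.continuous.continuousAt).eventually_ne hdet
    cases s with
    | true =>
      set M : Finset (Fin N) := Finset.univ.filter (fun j => tI Y I ≤ ⟪wI Y I, Y j⟫) with hM
      have hMne : M.Nonempty := by
        obtain ⟨i, hi⟩ := hIne
        exact ⟨i, Finset.mem_filter.mpr ⟨Finset.mem_univ i, (inner_wI hdet ⟨i, hi⟩).ge⟩⟩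
      have hvalY : candVal d Y (⟨⟨I, hIne, hIcard⟩, true⟩) = (M.card : ℝ)/N - capExtG d (tI Y I) := by
        simp only [candVal, if_true]
        rw [empM_eq]
      -- choose δ
      obtain ⟨δ', hδ'pos, hδ'⟩ := Metric.continuousAt_iff.mp ((capExtG_cont hd).continuousAt)
        (ε/2) (by linarith)
      set δ : ℝ := min (δ'/2) (tI Y I / 2) with hδdef
      have hδpos : 0 < δ := lt_min (by linarith) (by linarith)
      set τ : ℝ := tI Y I - δ with hτdef
      have hτpos : 0 < τ := by
        have : δ ≤ tI Y I / 2 := min_le_right _ _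
        rw [hτdef]; linarith
      have hcapτ : capExtG d τ ≤ capExtG d (tI Y I) + ε/2 := by
        have : dist τ (tI Y I) < δ' := by
          rw [Real.dist_eq, hτdef]
          have h1 : δ ≤ δ'/2 := min_le_left _ _
          rw [abs_of_nonpos (by linarith)]
          linarith
        have := hδ' this
        rw [Real.dist_eq, abs_sub_lt_iff] at this
        linarith [this.1]
      have hE1 : ∀ᶠ X in nhds Y, ∀ m : Fin N, m ∈ M → τ ≤ ⟪wI X I, X m⟫ := by
        rw [Filter.eventually_all]
        intro m
        by_cases hm : m ∈ M
        · have hval : τ < ⟪wI Y I, Y m⟫ := by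
            have := (Finset.mem_filter.mp hm).2
            rw [hτdef]; linarith
          have hev := ContinuousAt.eventually_lt continuousAt_const
            (inner_wI_continuousAt hdet hIne m) hval
          filter_upwards [hev] with X hX _
          exact hX.le
        · filter_upwards with X hmem
          exact absurd hmem hm
      filter_upwards [hE1, hgenEv, hdetEv] with X h1 h2 h3
      have hinj : Set.InjOn X Set.univ := generic_injOn h2 (by omega)
      -- feasible starting point for the min problem
      have hwXnorm : ‖wI X I‖ = 1 := norm_wI h3 hIne
      have hy₀ : ∀ m ∈ M, 1 ≤ ⟪X m, τ⁻¹ • wI X I⟫ := by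
        intro m hm
        rw [real_inner_smul_right]
        have h4 : τ ≤ ⟪wI X I, X m⟫ := h1 m hm
        have h5 : τ ≤ ⟪X m, wI X I⟫ := by rwa [real_inner_comm (X m) (wI X I)] at h4
        calc (1:ℝ) = τ⁻¹ * τ := (inv_mul_cancel₀ hτpos.ne').symm
          _ ≤ τ⁻¹ * ⟪X m, wI X I⟫ := by
              apply mul_le_mul_of_nonneg_left h5 (inv_pos.mpr hτpos).le
      obtain ⟨I', y, hI'M, hI'ne, hI'li, hcov, hact, hspan, hynorm, hy0⟩ :=
        var_min X M hMne hinj _ hy₀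
      obtain ⟨hw', ht'⟩ := glue X I' hI'ne hI'li y hy0 hact hspan
      have hnypos : 0 < ‖y‖ := norm_pos_iff.mpr hy0
      have hy₀norm : ‖τ⁻¹ • wI X I‖ = τ⁻¹ := by
        rw [norm_smul, Real.norm_eq_abs, abs_of_pos (inv_pos.mpr hτpos), hwXnorm, mul_one]
      have ht'τ : τ ≤ tI X I' := by
        rw [ht']
        rw [hy₀norm] at hynorm
        rw [← inv_inv τ]
        exact inv_anti₀ hnypos hynorm
      have hcount : ((M.card : ℝ))/N ≤ empM X (wI X I') (tI X I') := by
        apply empM_ge hN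
        intro m hm
        rw [hw', ht', real_inner_smul_left]
        have := hcov m hm
        have h6 : 1 ≤ ⟪y, X m⟫ := by rwa [real_inner_comm y (X m)] at this
        calc ‖y‖⁻¹ = ‖y‖⁻¹ * 1 := (mul_one _).symm
          _ ≤ ‖y‖⁻¹ * ⟪y, X m⟫ := by
              apply mul_le_mul_of_nonneg_left h6 (inv_pos.mpr hnypos).le
      have hfinal := lam_ge hd hN X ⟨⟨I', hI'ne, card_le_dim hI'li⟩, true⟩
      rw [hp, hvalY]
      have hcap2 : capExtG d (tI X I') ≤ capExtG d τ := capExtG_anti hd ht'τ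
      simp only [candVal, if_true] at hfinal
      linarith
    | false =>
      set M : Finset (Fin N) := Finset.univ.filter (fun j => ⟪wI Y I, Y j⟫ ≤ tI Y I) with hM
      have hMne : M.Nonempty := by
        obtain ⟨i, hi⟩ := hIne
        exact ⟨i, Finset.mem_filter.mpr ⟨Finset.mem_univ i, (inner_wI hdet ⟨i, hi⟩).le⟩⟩
      have hvalY : candVal d Y (⟨⟨I, hIne, hIcard⟩, false⟩)
          = (M.card : ℝ)/N - capExtG d (-(tI Y I)) := by
        simp only [candVal, Bool.false_eq_true, if_false]
        rw [empM_neg_eq]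
      obtain ⟨δ', hδ'pos, hδ'⟩ := Metric.continuousAt_iff.mp ((capExtG_cont hd).continuousAt)
        (ε/2) (by linarith)
      set δ : ℝ := δ'/2 with hδdef
      have hδpos : 0 < δ := by linarith
      set τ : ℝ := tI Y I + δ with hτdef
      have hτpos : 0 < τ := by rw [hτdef]; linarith
      have hcapτ : capExtG d (-τ) ≤ capExtG d (-(tI Y I)) + ε/2 := by
        have : dist (-τ) (-(tI Y I)) < δ' := by
          rw [Real.dist_eq, hτdef]
          rw [show -(tI Y I + δ) - -tI Y I = -δ by ring, abs_neg, abs_of_pos hδpos]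
          linarith
        have := hδ' this
        rw [Real.dist_eq, abs_sub_lt_iff] at this
        linarith [this.1]
      have hE1 : ∀ᶠ X in nhds Y, ∀ m : Fin N, m ∈ M → ⟪wI X I, X m⟫ ≤ τ := by
        rw [Filter.eventually_all]
        intro m
        by_cases hm : m ∈ M
        · have hval : ⟪wI Y I, Y m⟫ < τ := by
            have := (Finset.mem_filter.mp hm).2
            rw [hτdef]; linarith
          have hev := ContinuousAt.eventually_lt
            (inner_wI_continuousAt hdet hIne m) continuousAt_const hval
          filter_upwards [hev] with X hX _
          exact hX.le
        · filter_upwards with X hmem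
          exact absurd hmem hm
      filter_upwards [hE1, hgenEv, hdetEv] with X h1 h2 h3
      have hinj : Set.InjOn X Set.univ := generic_injOn h2 (by omega)
      rw [hp, hvalY]
      rcases bounded_or_separated hd X h2 M hMne with ⟨y₁, hy₁⟩ | ⟨B, hB⟩
      · -- a lower cap covers M : plus-type competitor wins outright
        obtain ⟨I', y, hI'M, hI'ne, hI'li, hcov, hact, hspan, hynorm, hy0⟩ :=
          var_min X M hMne hinj y₁ hy₁
        obtain ⟨hw', ht'⟩ := glue X I' hI'ne hI'li y hy0 hact hspan
        have hnypos : 0 < ‖y‖ := norm_pos_iff.mpr hy0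
        have hcount : ((M.card : ℝ))/N ≤ empM X (wI X I') (tI X I') := by
          apply empM_ge hN
          intro m hm
          rw [hw', ht', real_inner_smul_left]
          have := hcov m hm
          have h6 : 1 ≤ ⟪y, X m⟫ := by rwa [real_inner_comm y (X m)] at this
          calc ‖y‖⁻¹ = ‖y‖⁻¹ * 1 := (mul_one _).symm
            _ ≤ ‖y‖⁻¹ * ⟪y, X m⟫ := by
                apply mul_le_mul_of_nonneg_left h6 (inv_pos.mpr hnypos).le
        have hfinal := lam_ge hd hN X ⟨⟨I', hI'ne, card_le_dim hI'li⟩, true⟩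
        simp only [candVal, if_true] at hfinal
        have hc1 : capExtG d (tI X I') ≤ 1/2 := by
          apply capExtG_le_half hd
          rw [ht']
          positivity
        have hc2 : (1:ℝ)/2 ≤ capExtG d (-(tI Y I)) := by
          apply half_le_capExtG hd
          linarith
        linarith
      · -- bounded case : max-norm gives an upper cap competitor
        have hy₀le : ∀ m ∈ M, ⟪X m, τ⁻¹ • wI X I⟫ ≤ 1 := by
          intro m hm
          rw [real_inner_smul_right]
          have h4 : ⟪wI X I, X m⟫ ≤ τ := h1 m hm
          have h5 : ⟪X m, wI X I⟫ ≤ τ := by rwa [real_inner_comm (X m) (wI X I)] at h4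
          calc τ⁻¹ * ⟪X m, wI X I⟫ ≤ τ⁻¹ * τ := by
                apply mul_le_mul_of_nonneg_left h5 (inv_pos.mpr hτpos).le
            _ = 1 := inv_mul_cancel₀ hτpos.ne'
        have hwXnorm : ‖wI X I‖ = 1 := norm_wI h3 hIne
        have hy₀norm : ‖τ⁻¹ • wI X I‖ = τ⁻¹ := by
          rw [norm_smul, Real.norm_eq_abs, abs_of_pos (inv_pos.mpr hτpos), hwXnorm, mul_one]
        have hy₀0 : (τ⁻¹ • wI X I) ≠ 0 := by
          intro h
          rw [h, norm_zero] at hy₀norm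
          exact absurd hy₀norm.symm (by positivity)
        obtain ⟨I', y, hI'M, hI'ne, hI'li, hcov, hact, hspan, hynorm, hy0⟩ :=
          var_max X M hMne hinj ⟨B, hB⟩ _ hy₀le hy₀0
        obtain ⟨hw', ht'⟩ := glue X I' hI'ne hI'li y hy0 hact hspan
        have hnypos : 0 < ‖y‖ := norm_pos_iff.mpr hy0
        have ht'τ : tI X I' ≤ τ := by
          rw [ht']
          rw [hy₀norm] at hynorm
          rw [← inv_inv τ]
          exact inv_anti₀ (by positivity) hynorm
        have hcount : ((M.card : ℝ))/N ≤ empM X (-(wI X I')) (-(tI X I')) := by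
          apply empM_ge_neg hN
          intro m hm
          rw [hw', ht', real_inner_smul_left]
          have := hcov m hm
          have h6 : ⟪y, X m⟫ ≤ 1 := by rwa [real_inner_comm y (X m)] at this
          calc ‖y‖⁻¹ * ⟪y, X m⟫ ≤ ‖y‖⁻¹ * 1 := by
                apply mul_le_mul_of_nonneg_left h6 (inv_pos.mpr hnypos).le
            _ = ‖y‖⁻¹ := mul_one _
        have hfinal := lam_ge hd hN X ⟨⟨I', hI'ne, card_le_dim hI'li⟩, false⟩
        simp only [candVal, Bool.false_eq_true, if_false] at hfinal
        have hcap2 : capExtG d (-(tI X I')) ≤ capExtG d (-τ) :=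
          capExtG_anti hd (by linarith)
        linarith
  filter_upwards [hupper, hlower] with X h1 h2
  rw [Real.dist_eq, abs_sub_lt_iff]
  constructor <;> linarith

end ContSec


section FinalSec
variable {d N : ℕ}

theorem part2 (d N : ℕ) (hd : 3 ≤ d) (hN : 0 < N) (Xb : Fin N → EuclideanSpace ℝ (Fin d))
    (hgen : Generic Xb) :
    ∃ U : Set (Fin N → EuclideanSpace ℝ (Fin d)), IsOpen U ∧ Xb ∈ U ∧
      (∀ X ∈ U, Generic X) ∧ ∃ K : NNReal, LipschitzOnWith K (Lam d N) U := by
  classical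
  set J : Finset (Finset (Fin N)) :=
    Finset.univ.filter (fun I => I.Nonempty ∧ I.card ≤ d) with hJ
  set V : Set (Fin N → EuclideanSpace ℝ (Fin d)) :=
    ⋂ I ∈ J, {X | (Gram X I).det ≠ 0} with hV
  have hVopen : IsOpen V := by
    apply isOpen_biInter_finset
    intro I _
    exact isOpen_compl_singleton.preimage gram_det_contDiff.continuous
  have hVdets : ∀ X ∈ V, ∀ I : Finset (Fin N), I.Nonempty → I.card ≤ d →
      (Gram X I).det ≠ 0 := by
    intro X hX I hne hcard
    have := Set.mem_iInter₂.mp hX I (Finset.mem_filter.mpr ⟨Finset.mem_univ _, hne, hcard⟩)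
    exact this
  have hXbV : Xb ∈ V := by
    apply Set.mem_iInter₂.mpr
    intro I hI
    exact gram_det_ne_of_li Xb I (hgen I (Finset.mem_filter.mp hI).2.2)
  have hVgen : ∀ X ∈ V, Generic X := by
    intro X hX I hcard
    rcases Finset.eq_empty_or_nonempty I with h | h
    · subst h
      have : IsEmpty {x // x ∈ (∅ : Finset (Fin N))} :=
        ⟨fun i => (Finset.notMem_empty _ i.2)⟩
      exact linearIndependent_empty_type
    · exact li_of_gram_det_ne X I (hVdets X hX I h hcard)
  -- radius
  obtain ⟨ρ, hρpos, hρ⟩ : ∃ ρ > 0, Metric.closedBall Xb ρ ⊆ V := by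
    rcases Metric.nhds_basis_closedBall.mem_iff.mp (hVopen.mem_nhds hXbV) with ⟨ρ, h1, h2⟩
    exact ⟨ρ, h1, h2⟩
  set c : ℝ := Real.sqrt (2*N) with hc
  have hcnn : 0 ≤ c := Real.sqrt_nonneg _
  have hc2 : c^2 = 2*N := Real.sq_sqrt (by positivity)
  set r₀ : ℝ := ρ / (c+1) with hr₀
  have hr₀pos : 0 < r₀ := div_pos hρpos (by linarith)
  have hr₀ρ : r₀ ≤ ρ := by
    rw [hr₀]
    rw [div_le_iff₀ (by linarith : (0:ℝ) < c + 1)]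
    nlinarith
  -- squared-distance functional
  set Φ : (Fin N → EuclideanSpace ℝ (Fin d)) → ℝ :=
    fun X => ∑ i : Fin N, ⟪X i - Xb i, X i - Xb i⟫ with hΦ
  have hΦCD : ContDiff ℝ 1 Φ := by
    apply ContDiff.sum
    intro i _
    have hproj : ContDiff ℝ 1 (fun X : Fin N → EuclideanSpace ℝ (Fin d) => X i - Xb i) :=
      ((ContinuousLinearMap.proj (R := ℝ) (φ := fun _ : Fin N => EuclideanSpace ℝ (Fin d))
        i).contDiff).sub contDiff_const
    exact ContDiff.inner ℝ hproj hproj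
  have hΦterm : ∀ (X : Fin N → EuclideanSpace ℝ (Fin d)) (i : Fin N), ⟪X i - Xb i, X i - Xb i⟫ = ‖X i - Xb i‖^2 :=
    fun X i => real_inner_self_eq_norm_sq _
  have hΦball : ∀ X ∈ Metric.ball Xb r₀, Φ X ≤ N * r₀^2 := by
    intro X hX
    rw [hΦ]
    calc ∑ i : Fin N, ⟪X i - Xb i, X i - Xb i⟫ ≤ ∑ _i : Fin N, r₀^2 := by
          apply Finset.sum_le_sum
          intro i _
          rw [hΦterm]
          have h1 : dist (X i) (Xb i) ≤ dist X Xb := dist_le_pi_dist X Xb i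
          have h2 : dist X Xb < r₀ := hX
          have h3 : ‖X i - Xb i‖ ≤ r₀ := by
            rw [← dist_eq_norm]
            linarith
          nlinarith [norm_nonneg (X i - Xb i)]
      _ = N * r₀^2 := by rw [Finset.sum_const]; simp [mul_comm]
  have hΦV : ∀ X, Φ X ≤ 2*N*r₀^2 → X ∈ V := by
    intro X hXΦ
    apply hρ
    rw [Metric.mem_closedBall]
    rw [dist_pi_le_iff hρpos.le]
    intro i
    have h1 : ‖X i - Xb i‖^2 ≤ Φ X := by
      rw [← hΦterm X i, hΦ]
      apply Finset.single_le_sum (f := fun i => ⟪X i - Xb i, X i - Xb i⟫) ?_ (Finset.mem_univ i)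
      intro j _
      show (0:ℝ) ≤ ⟪X j - Xb j, X j - Xb j⟫
      rw [hΦterm]
      positivity
    have h2 : ‖X i - Xb i‖^2 ≤ (c*r₀)^2 := by
      have : (c*r₀)^2 = 2*N*r₀^2 := by rw [mul_pow, hc2]
      rw [this]
      linarith
    have h3 : ‖X i - Xb i‖ ≤ c*r₀ := by
      nlinarith [norm_nonneg (X i - Xb i), mul_nonneg hcnn hr₀pos.le]
    rw [dist_eq_norm]
    calc ‖X i - Xb i‖ ≤ c * r₀ := h3
      _ ≤ (c+1) * r₀ := by nlinarith
      _ = ρ := by rw [hr₀]; field_simp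
  -- bump function
  set ψ : (Fin N → EuclideanSpace ℝ (Fin d)) → ℝ :=
    fun X => Real.smoothTransition (2 - Φ X / (N*r₀^2)) with hψ
  have hNr2 : (0:ℝ) < N * r₀^2 := by positivity
  have hψCD : ContDiff ℝ 1 ψ := by
    have harg : ContDiff ℝ 1 (fun X => 2 - Φ X / (N*r₀^2)) :=
      contDiff_const.sub (hΦCD.div_const _)
    have hst : ContDiff ℝ 1 Real.smoothTransition := by
      exact_mod_cast Real.smoothTransition.contDiff (n := 1)
    exact hst.comp harg
  have hψ1 : ∀ X, Φ X ≤ N*r₀^2 → ψ X = 1 := by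
    intro X h
    apply Real.smoothTransition.one_of_one_le
    rw [le_sub_iff_add_le]
    have : Φ X / (N*r₀^2) ≤ 1 := by
      rw [div_le_one hNr2]
      exact h
    linarith
  have hψ0 : ∀ X, 2*N*r₀^2 < Φ X → ψ X = 0 := by
    intro X h
    apply Real.smoothTransition.zero_of_nonpos
    have : 2 ≤ Φ X / (N*r₀^2) := by
      rw [le_div_iff₀ hNr2]
      linarith
    linarith
  -- the selection family
  set G : (Fin (N+1) × CandIdx d N) → (Fin N → EuclideanSpace ℝ (Fin d)) → ℝ :=
    fun q X => ((q.1 : ℕ) : ℝ)/N -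
      ψ X * capExtG d (if q.2.2 then tI X q.2.1.1 else -(tI X q.2.1.1)) with hG
  have hGCD : ∀ q, ContDiff ℝ 1 (G q) := by
    rintro ⟨m, ⟨⟨I, hIne, hIcard⟩, s⟩⟩
    rw [contDiff_iff_contDiffAt]
    intro X₀
    by_cases hX₀ : Φ X₀ ≤ 2*N*r₀^2
    · have hdet : (Gram X₀ I).det ≠ 0 := hVdets X₀ (hΦV X₀ hX₀) I hIne hIcard
      apply ContDiffAt.sub contDiffAt_const
      apply ContDiffAt.mul hψCD.contDiffAt
      apply ContDiffAt.comp X₀ (capExtG_contDiff hd).contDiffAt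
      cases s
      · simp only [Bool.false_eq_true, if_false]
        exact (tI_contDiffAt hdet hIne).neg
      · simp only [if_true]
        exact tI_contDiffAt hdet hIne
    · push_neg at hX₀
      have hopen : IsOpen {X | 2*N*r₀^2 < Φ X} :=
        isOpen_lt continuous_const hΦCD.continuous
      apply ContDiffAt.congr_of_eventuallyEq (contDiffAt_const (c := ((m : ℕ) : ℝ)/N))
      filter_upwards [hopen.mem_nhds hX₀] with X hX
      simp only [hG]
      rw [hψ0 X hX, zero_mul, sub_zero]
  -- selection property on the small ball
  have hsel : ∀ X ∈ Metric.ball Xb r₀, ∃ q : Fin (N+1) × CandIdx d N, Lam d N X = G q X := by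
    intro X hX
    obtain ⟨p, hp⟩ := lam_mem hd hN X
    have hψX : ψ X = 1 := hψ1 X (hΦball X hX)
    obtain ⟨⟨I, hIne, hIcard⟩, s⟩ := p
    cases s
    · set n : ℕ := (Finset.univ.filter (fun i => ⟪wI X I, X i⟫ ≤ tI X I)).card with hn
      have hnle : n < N + 1 := by
        have := Finset.card_filter_le (Finset.univ : Finset (Fin N))
          (fun i => ⟪wI X I, X i⟫ ≤ tI X I)
        simp only [Finset.card_univ, Fintype.card_fin] at this
        omega
      refine ⟨⟨⟨n, hnle⟩, ⟨⟨I, hIne, hIcard⟩, false⟩⟩, ?_⟩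
      rw [hp]
      simp only [candVal, Bool.false_eq_true, if_false, hG, hψX, one_mul]
      rw [empM_neg_eq]
    · set n : ℕ := (Finset.univ.filter (fun i => tI X I ≤ ⟪wI X I, X i⟫)).card with hn
      have hnle : n < N + 1 := by
        have := Finset.card_filter_le (Finset.univ : Finset (Fin N))
          (fun i => tI X I ≤ ⟪wI X I, X i⟫)
        simp only [Finset.card_univ, Fintype.card_fin] at this
        omega
      refine ⟨⟨⟨n, hnle⟩, ⟨⟨I, hIne, hIcard⟩, true⟩⟩, ?_⟩
      rw [hp]
      simp only [candVal, if_true, hG, hψX, one_mul]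
      rw [empM_eq]
  -- continuity of Λ on the small ball
  have hball_sub : Metric.ball Xb r₀ ⊆ V := fun X hX =>
    hρ (Metric.mem_closedBall.mpr (le_trans (le_of_lt hX) hr₀ρ))
  have hcontOn : ContinuousOn (Lam d N) (Metric.ball Xb r₀) := by
    intro Y hY
    have hYV : Y ∈ V := hball_sub hY
    apply ContinuousAt.continuousWithinAt
    apply lam_continuousAt hd hN
    · filter_upwards [hVopen.mem_nhds hYV] with X hX
      exact hVgen X hX
    · exact hVdets Y hYV
  -- apply the selection-Lipschitz theorem
  set k : ℕ := Fintype.card (Fin (N+1) × CandIdx d N) with hk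
  set e := (Fintype.equivFin (Fin (N+1) × CandIdx d N)) with he
  set g : Fin k → (Fin N → EuclideanSpace ℝ (Fin d)) → ℝ := fun i => G (e.symm i) with hg
  obtain ⟨K, ε, hεpos, hεsub, hlip⟩ := part1 (Fin N → EuclideanSpace ℝ (Fin d))
    (Metric.ball Xb r₀) Metric.isOpen_ball (Lam d N) hcontOn k g
    (fun i => hGCD (e.symm i))
    (by
      intro X hX
      obtain ⟨q, hq⟩ := hsel X hX
      exact ⟨e q, by rw [hg]; simp only [Equiv.symm_apply_apply]; exact hq⟩)
    Xb (Metric.mem_ball_self hr₀pos)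
  refine ⟨Metric.ball Xb ε, Metric.isOpen_ball, Metric.mem_ball_self hεpos, ?_, K, hlip⟩
  intro X hX
  exact hVgen X (hball_sub (hεsub hX))

end FinalSec

/-- a continuous selection of finitely many `C¹` functions on an open set in a
finite-dimensional normed space is locally Lipschitz; consequently the generalized cap
discrepancy `Λ` is Lipschitz continuous on a neighborhood of any generic point set. -/
theorem selection_locally_lipschitz_and_Lam_lipschitz :
    (∀ (F : Type) [NormedAddCommGroup F] [NormedSpace ℝ F] [FiniteDimensional ℝ F]
      (U : Set F) (_ : IsOpen U) (f : F → ℝ) (_ : ContinuousOn f U)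
      (k : ℕ) (g : Fin k → F → ℝ) (_ : ∀ i, ContDiff ℝ 1 (g i))
      (_ : ∀ x ∈ U, ∃ i, f x = g i x) (x : F) (_ : x ∈ U),
      ∃ K : NNReal, ∃ ε : ℝ, 0 < ε ∧ Metric.ball x ε ⊆ U ∧
        LipschitzOnWith K f (Metric.ball x ε)) ∧
    (∀ (d N : ℕ), 3 ≤ d → 0 < N → ∀ Xb : Fin N → EuclideanSpace ℝ (Fin d), Generic Xb →
      ∃ U : Set (Fin N → EuclideanSpace ℝ (Fin d)), IsOpen U ∧ Xb ∈ U ∧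
        (∀ X ∈ U, Generic X) ∧ ∃ K : NNReal, LipschitzOnWith K (Lam d N) U) := by
  constructor
  · intro F _ _ _ U hU f hf k g hg hsel x hx
    exact part1 F U hU f hf k g hg hsel x hx
  · intro d N hd hN Xb hgen
    exact part2 d N hd hN Xb hgen
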